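/- arXiv:2004.03417 — 6 statements merged into one kernel-verified Lean document; each statement's English description precedes it below -/
import Mathlib

section
/- Let T > 0 and let x : [0,T] → ℝ be α-Hölder continuous and w : [0,T] → ℝ be β-Hölder continuous with α, β ∈ (0,1] and α + β > 1. Then there exists a unique continuous map J : [0,T] → ℝ with J(0) = 0 such that for every s, t ∈ [0,T] with s < t and every sequence (D_n) of dissections of [s,t] whose meshes tend to 0, the Riemann sums J_{x,w,D_n}(s,t) converge to J(t) − J(s). -/
open Filter

/-- The Riemann sum of `x` with respect to `w` for the dissection `D 0 < D 1 < … < D m`. -/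
def RiemannSum (x w : ℝ → ℝ) (m : ℕ) (D : ℕ → ℝ) : ℝ :=
  ∑ k ∈ Finset.range m, x (D k) * (w (D (k + 1)) - w (D k))

/-- `D 0 = s < D 1 < … < D m = t` is a dissection of `[s, t]`. -/
def IsDissection (s t : ℝ) (m : ℕ) (D : ℕ → ℝ) : Prop :=
  0 < m ∧ D 0 = s ∧ D m = t ∧ ∀ k < m, D k < D (k + 1)

/-- `J` is a primitive of the Young integral of `x` with respect to `w` on `[0, T]`:
it is continuous, vanishes at `0`, and for all `0 ≤ s < t ≤ T` the Riemann sums along any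
sequence of dissections of `[s, t]` with mesh tending to `0` converge to `J t - J s`. -/
def IsYoungPrimitive (T : ℝ) (x w J : ℝ → ℝ) : Prop :=
  ContinuousOn J (Set.Icc 0 T) ∧ J 0 = 0 ∧
    ∀ s t : ℝ, 0 ≤ s → s < t → t ≤ T →
      ∀ (m : ℕ → ℕ) (D : ℕ → ℕ → ℝ),
        (∀ n, IsDissection s t (m n) (D n)) →
        (∀ ε > 0, ∃ N : ℕ, ∀ n ≥ N, ∀ k < m n, D n (k + 1) - D n k < ε) →
        Tendsto (fun n => RiemannSum x w (m n) (D n)) atTop (nhds (J t - J s))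

section YoungAux
open Finset

noncomputable def youngZ (θ : ℝ) : ℝ := ∑' n : ℕ, ((n : ℝ) + 1) ^ (-θ)

lemma youngZ_summable {θ : ℝ} (hθ : 1 < θ) :
    Summable (fun n : ℕ => ((n : ℝ) + 1) ^ (-θ)) := by
  have h := (Real.summable_one_div_nat_rpow (p := θ)).2 hθ
  have h2 := h.comp_injective Nat.succ_injective
  convert h2 using 2 with n
  case e'_3 => rfl
  simp only [Function.comp, Nat.succ_eq_add_one]
  rw [one_div, ← Real.rpow_neg (by positivity)]
  push_cast
  ring_nf

lemma sum_le_youngZ {θ : ℝ} (hθ : 1 < θ) (n : ℕ) :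
    ∑ i ∈ range n, ((i : ℝ) + 1) ^ (-θ) ≤ youngZ θ :=
  Summable.sum_le_tsum _ (fun i _ => by positivity) (youngZ_summable hθ)

lemma youngZ_nonneg {θ : ℝ} (hθ : 1 < θ) : 0 ≤ youngZ θ := by
  have := sum_le_youngZ hθ 0
  simpa using this

lemma diss_mono {m : ℕ} {D : ℕ → ℝ} (h : ∀ k < m, D k < D (k + 1)) :
    ∀ {i j : ℕ}, i ≤ j → j ≤ m → D i ≤ D j := by
  intro i j hij hjm
  induction j with
  | zero => simp_all
  | succ n ih =>
    rcases Nat.eq_or_lt_of_le hij with rfl | hlt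
    · exact le_refl _
    · exact le_trans (ih (Nat.lt_succ_iff.mp hlt) (by omega)) (le_of_lt (h n (by omega)))

lemma diss_strict {m : ℕ} {D : ℕ → ℝ} (h : ∀ k < m, D k < D (k + 1))
    {i j : ℕ} (hij : i < j) (hjm : j ≤ m) : D i < D j := by
  have h1 : D i ≤ D (j - 1) := diss_mono h (by omega) (by omega)
  have h2 : D (j - 1) < D (j - 1 + 1) := h (j - 1) (by omega)
  have : j - 1 + 1 = j := by omega
  rw [this] at h2
  linarith

lemma RS_delete (x w : ℝ → ℝ) (m i : ℕ) (hi : i < m) (D : ℕ → ℝ) :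
    RiemannSum x w (m + 1) D =
      RiemannSum x w m (fun k => if k ≤ i then D k else D (k + 1))
      + (x (D (i + 1)) - x (D i)) * (w (D (i + 2)) - w (D (i + 1))) := by
  set f : ℕ → ℝ := fun k => x (D k) * (w (D (k + 1)) - w (D k)) with hf
  set D' : ℕ → ℝ := fun k => if k ≤ i then D k else D (k + 1) with hD'
  set g : ℕ → ℝ := fun k => x (D' k) * (w (D' (k + 1)) - w (D' k)) with hg
  have hgf : ∀ k < i, g k = f k := by
    intro k hk
    simp only [hg, hD', hf]
    rw [if_pos (by omega), if_pos (by omega)]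
  have hgi : g i = x (D i) * (w (D (i + 2)) - w (D i)) := by
    simp only [hg, hD']
    rw [if_pos (le_refl i), if_neg (by omega)]
  have hgs : ∀ k, i < k → g k = f (k + 1) := by
    intro k hk
    simp only [hg, hD', hf]
    rw [if_neg (by omega), if_neg (by omega)]
  have lhs : RiemannSum x w (m + 1) D =
      (∑ k ∈ Finset.Ico 0 i, f k) + (f i + f (i + 1)) + ∑ k ∈ Finset.Ico (i + 2) (m + 1), f k := by
    rw [RiemannSum, ← hf, range_eq_Ico,
      ← Finset.sum_Ico_consecutive f (Nat.zero_le i) (by omega : i ≤ m + 1),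
      ← Finset.sum_Ico_consecutive f (by omega : i ≤ i + 2) (by omega : i + 2 ≤ m + 1)]
    have : ∑ k ∈ Finset.Ico i (i + 2), f k = f i + f (i + 1) := by
      rw [Finset.sum_Ico_eq_sum_range]
      simp [Finset.sum_range_succ]
    rw [this]; ring
  have rhs : RiemannSum x w m D' =
      (∑ k ∈ Finset.Ico 0 i, f k) + g i + ∑ k ∈ Finset.Ico (i + 2) (m + 1), f k := by
    rw [RiemannSum, ← hg, range_eq_Ico,
      ← Finset.sum_Ico_consecutive g (Nat.zero_le i) (by omega : i ≤ m),
      ← Finset.sum_Ico_consecutive g (by omega : i ≤ i + 1) (by omega : i + 1 ≤ m)]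
    have e1 : ∑ k ∈ Finset.Ico 0 i, g k = ∑ k ∈ Finset.Ico 0 i, f k :=
      Finset.sum_congr rfl (fun k hk => hgf k (Finset.mem_Ico.mp hk).2)
    have e2 : ∑ k ∈ Finset.Ico i (i + 1), g k = g i := by
      rw [Finset.sum_Ico_eq_sum_range]; simp
    have e3 : ∑ k ∈ Finset.Ico (i + 1) m, g k = ∑ k ∈ Finset.Ico (i + 2) (m + 1), f k := by
      rw [Finset.sum_Ico_eq_sum_range, Finset.sum_Ico_eq_sum_range]
      have hm : m - (i + 1) = m + 1 - (i + 2) := by omega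
      rw [hm]
      refine Finset.sum_congr rfl (fun k _ => ?_)
      rw [hgs (i + 1 + k) (by omega)]
      congr 1
      omega
    rw [e1, e2, e3]; ring
  rw [lhs, rhs, hgi]
  simp only [hf]
  ring

lemma exists_small_gap {m : ℕ} (hm : 1 ≤ m) {D : ℕ → ℝ} (h : ∀ k < m + 1, D k < D (k + 1)) :
    ∃ i < m, D (i + 2) - D i ≤ 2 * (D (m + 1) - D 0) / m := by
  have hsum : ∑ i ∈ range m, (D (i + 2) - D i) = (D (m + 1) - D 1) + (D m - D 0) := by
    have e : ∀ i, D (i + 2) - D i = (D (i + 2) - D (i + 1)) + (D (i + 1) - D i) := by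
      intro i; ring
    simp only [e]
    rw [Finset.sum_add_distrib, Finset.sum_range_sub (fun i => D (i + 1)),
      Finset.sum_range_sub D]
  have h01 : D 0 ≤ D 1 := (h 0 (by omega)).le
  have hmm : D m ≤ D (m + 1) := (h m (by omega)).le
  have hsum2 : ∑ i ∈ range m, (D (i + 2) - D i) ≤
      ∑ i ∈ range m, 2 * (D (m + 1) - D 0) / m := by
    rw [hsum, Finset.sum_const, card_range, nsmul_eq_mul]
    have hm0 : (m : ℝ) ≠ 0 := by positivity
    field_simp
    linarith
  obtain ⟨i, hi, hle⟩ := Finset.exists_le_of_sum_le ⟨0, Finset.mem_range.mpr hm⟩ hsum2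
  exact ⟨i, Finset.mem_range.mp hi, hle⟩

lemma young_max (x w : ℝ → ℝ) (T Cx Cw α β : ℝ) (hCx : 0 ≤ Cx) (hCw : 0 ≤ Cw)
    (hα : 0 < α) (hβ : 0 < β) (hαβ : 1 < α + β)
    (hx : ∀ s ∈ Set.Icc (0 : ℝ) T, ∀ t ∈ Set.Icc (0 : ℝ) T, |x t - x s| ≤ Cx * |t - s| ^ α)
    (hw : ∀ s ∈ Set.Icc (0 : ℝ) T, ∀ t ∈ Set.Icc (0 : ℝ) T, |w t - w s| ≤ Cw * |t - s| ^ β) :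
    ∀ (m : ℕ) (D : ℕ → ℝ), 0 < m → (∀ k ≤ m, D k ∈ Set.Icc (0 : ℝ) T) →
      (∀ k < m, D k < D (k + 1)) →
      |RiemannSum x w m D - x (D 0) * (w (D m) - w (D 0))|
        ≤ Cx * Cw * 2 ^ (α + β) * youngZ (α + β) * (D m - D 0) ^ (α + β) := by
  set θ := α + β with hθdef
  have hθ1 : 1 < θ := hαβ
  have key : ∀ (m : ℕ) (D : ℕ → ℝ), 0 < m → (∀ k ≤ m, D k ∈ Set.Icc (0 : ℝ) T) →
      (∀ k < m, D k < D (k + 1)) →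
      |RiemannSum x w m D - x (D 0) * (w (D m) - w (D 0))|
        ≤ Cx * Cw * 2 ^ θ * (∑ i ∈ range (m - 1), ((i : ℝ) + 1) ^ (-θ)) * (D m - D 0) ^ θ := by
    intro m
    induction m with
    | zero => intro D h0; omega
    | succ n ih =>
      intro D _ hD hincr
      rcases Nat.eq_zero_or_pos n with rfl | hn
      · have h1 : D 0 < D 1 := hincr 0 (by omega)
        simp [RiemannSum]
      -- n ≥ 1
      obtain ⟨i, hi, hgap⟩ := exists_small_gap hn hincr
      set D' : ℕ → ℝ := fun k => if k ≤ i then D k else D (k + 1) with hD'def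
      have hD'0 : D' 0 = D 0 := by simp [hD'def]
      have hD'n : D' n = D (n + 1) := by
        simp only [hD'def]; rw [if_neg (by omega)]
      have hD'incr : ∀ k < n, D' k < D' (k + 1) := by
        intro k hk
        simp only [hD'def]
        split_ifs with h1 h2 h2
        · exact hincr k (by omega)
        · have hki : k = i := by omega
          subst hki
          exact diss_strict hincr (by omega) (by omega)
        · omega
        · exact hincr (k + 1) (by omega)
      have hD'mem : ∀ k ≤ n, D' k ∈ Set.Icc (0 : ℝ) T := by
        intro k hk
        simp only [hD'def]
        split_ifs with h1
        · exact hD k (by omega)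
        · exact hD (k + 1) (by omega)
      set E := (x (D (i + 1)) - x (D i)) * (w (D (i + 2)) - w (D (i + 1))) with hEdef
      have hdel := RS_delete x w n i hi D
      rw [← hD'def, ← hEdef] at hdel
      have hIH := ih D' hn hD'mem hD'incr
      rw [hD'0, hD'n] at hIH
      have hmem0 := hD i (by omega)
      have hmem1 := hD (i + 1) (by omega)
      have hmem2 := hD (i + 2) (by omega)
      have h01 : D i < D (i + 1) := hincr i (by omega)
      have h12 : D (i + 1) < D (i + 2) := hincr (i + 1) (by omega)
      have hxb : |x (D (i + 1)) - x (D i)| ≤ Cx * (D (i + 2) - D i) ^ α := by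
        calc |x (D (i + 1)) - x (D i)| ≤ Cx * |D (i + 1) - D i| ^ α := hx _ hmem0 _ hmem1
        _ ≤ Cx * (D (i + 2) - D i) ^ α := by
            apply mul_le_mul_of_nonneg_left _ hCx
            rw [abs_of_pos (by linarith)]
            exact Real.rpow_le_rpow (by linarith) (by linarith) hα.le
      have hwb : |w (D (i + 2)) - w (D (i + 1))| ≤ Cw * (D (i + 2) - D i) ^ β := by
        calc |w (D (i + 2)) - w (D (i + 1))| ≤ Cw * |D (i + 2) - D (i + 1)| ^ β :=
              hw _ hmem1 _ hmem2
        _ ≤ Cw * (D (i + 2) - D i) ^ β := by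
            apply mul_le_mul_of_nonneg_left _ hCw
            rw [abs_of_pos (by linarith)]
            exact Real.rpow_le_rpow (by linarith) (by linarith) hβ.le
      have hgap0 : (0:ℝ) < D (i + 2) - D i := by linarith
      have hE : |E| ≤ Cx * Cw * (D (i + 2) - D i) ^ θ := by
        rw [hEdef, abs_mul]
        calc |x (D (i + 1)) - x (D i)| * |w (D (i + 2)) - w (D (i + 1))|
            ≤ (Cx * (D (i + 2) - D i) ^ α) * (Cw * (D (i + 2) - D i) ^ β) := by
              apply mul_le_mul hxb hwb (abs_nonneg _)
              positivity
        _ = Cx * Cw * (D (i + 2) - D i) ^ θ := by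
              rw [hθdef, Real.rpow_add hgap0]; ring
      set L := D (n + 1) - D 0 with hLdef
      have hL0 : 0 < L := by
        have := diss_strict hincr (show 0 < n + 1 by omega) (le_refl _)
        rw [hLdef]; linarith
      have hn0 : (0:ℝ) < (n : ℝ) := by exact_mod_cast hn
      have hgapθ : (D (i + 2) - D i) ^ θ ≤ 2 ^ θ * ((n : ℝ)) ^ (-θ) * L ^ θ := by
        have step : (D (i + 2) - D i) ^ θ ≤ (2 * L / n) ^ θ :=
          Real.rpow_le_rpow hgap0.le hgap (by linarith)
        refine step.trans (le_of_eq ?_)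
        rw [Real.div_rpow (by linarith) hn0.le, Real.mul_rpow (by norm_num) hL0.le,
          Real.rpow_neg hn0.le, div_eq_mul_inv]
        ring
      have hEb : |E| ≤ Cx * Cw * 2 ^ θ * ((n : ℝ)) ^ (-θ) * L ^ θ := by
        calc |E| ≤ Cx * Cw * (D (i + 2) - D i) ^ θ := hE
        _ ≤ Cx * Cw * (2 ^ θ * ((n : ℝ)) ^ (-θ) * L ^ θ) :=
            mul_le_mul_of_nonneg_left hgapθ (mul_nonneg hCx hCw)
        _ = Cx * Cw * 2 ^ θ * ((n : ℝ)) ^ (-θ) * L ^ θ := by ring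
      rw [hdel]
      have hsum_eq : ∑ i ∈ range (n + 1 - 1), ((i : ℝ) + 1) ^ (-θ)
          = (∑ i ∈ range (n - 1), ((i : ℝ) + 1) ^ (-θ)) + ((n : ℝ)) ^ (-θ) := by
        have h1 : n + 1 - 1 = (n - 1) + 1 := by omega
        rw [h1, Finset.sum_range_succ]
        congr 2
        have h2 : ((n - 1 : ℕ) : ℝ) = (n : ℝ) - 1 := by
          have hcast : ((n - 1 : ℕ) : ℝ) + 1 = (n : ℝ) := by
            have : (n - 1) + 1 = n := by omega
            exact_mod_cast congrArg (Nat.cast : ℕ → ℝ) this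
          linarith
        rw [h2]; ring
      rw [hsum_eq]
      set S := ∑ i ∈ range (n - 1), ((i : ℝ) + 1) ^ (-θ) with hSdef
      have habs : |RiemannSum x w n D' + E - x (D 0) * (w (D (n + 1)) - w (D 0))|
          ≤ |RiemannSum x w n D' - x (D 0) * (w (D (n + 1)) - w (D 0))| + |E| := by
        have := abs_add_le (RiemannSum x w n D' - x (D 0) * (w (D (n + 1)) - w (D 0))) E
        have heq : RiemannSum x w n D' - x (D 0) * (w (D (n + 1)) - w (D 0)) + E
            = RiemannSum x w n D' + E - x (D 0) * (w (D (n + 1)) - w (D 0)) := by ring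
        rw [heq] at this
        exact this
      have hfin : Cx * Cw * 2 ^ θ * S * L ^ θ + Cx * Cw * 2 ^ θ * ((n : ℝ)) ^ (-θ) * L ^ θ
          = Cx * Cw * 2 ^ θ * (S + ((n : ℝ)) ^ (-θ)) * L ^ θ := by ring
      linarith [hIH, hEb, habs]
  intro m D hm hD hincr
  calc |RiemannSum x w m D - x (D 0) * (w (D m) - w (D 0))|
      ≤ Cx * Cw * 2 ^ θ * (∑ i ∈ range (m - 1), ((i : ℝ) + 1) ^ (-θ)) * (D m - D 0) ^ θ :=
        key m D hm hD hincr
  _ ≤ Cx * Cw * 2 ^ θ * youngZ θ * (D m - D 0) ^ θ := by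
      have hL : (0:ℝ) ≤ D m - D 0 := by
        have := diss_strict hincr hm (le_refl m)
        linarith
      apply mul_le_mul_of_nonneg_right _ (Real.rpow_nonneg hL θ)
      apply mul_le_mul_of_nonneg_left (sum_le_youngZ hθ1 _)
      positivity

lemma sum_blocks (f : ℕ → ℝ) (φ : ℕ → ℕ) (h0 : φ 0 = 0) :
    ∀ m, (∀ j < m, φ j ≤ φ (j + 1)) →
      ∑ k ∈ range (φ m), f k = ∑ j ∈ range m, ∑ k ∈ Finset.Ico (φ j) (φ (j + 1)), f k := by
  intro m
  induction m with
  | zero => intro _; simp [h0]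
  | succ n ih =>
    intro h
    rw [Finset.sum_range_succ, ← ih (fun j hj => h j (by omega)), range_eq_Ico, range_eq_Ico]
    exact (Finset.sum_Ico_consecutive f (Nat.zero_le _) (h n (by omega))).symm

lemma refine_bound (x w : ℝ → ℝ) (T Cx Cw α β : ℝ) (hCx : 0 ≤ Cx) (hCw : 0 ≤ Cw)
    (hα : 0 < α) (hβ : 0 < β) (hαβ : 1 < α + β)
    (hx : ∀ s ∈ Set.Icc (0 : ℝ) T, ∀ t ∈ Set.Icc (0 : ℝ) T, |x t - x s| ≤ Cx * |t - s| ^ α)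
    (hw : ∀ s ∈ Set.Icc (0 : ℝ) T, ∀ t ∈ Set.Icc (0 : ℝ) T, |w t - w s| ≤ Cw * |t - s| ^ β)
    (m : ℕ) (D : ℕ → ℝ) (hm : 0 < m) (hD : ∀ k ≤ m, D k ∈ Set.Icc (0 : ℝ) T)
    (hincr : ∀ k < m, D k < D (k + 1))
    (δ : ℝ) (hδ : ∀ k < m, D (k + 1) - D k ≤ δ)
    (q : ℕ) (F : ℕ → ℝ) (hF : ∀ k < q, F k < F (k + 1))
    (hFmem : ∀ k ≤ q, F k ∈ Set.Icc (0 : ℝ) T)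
    (φ : ℕ → ℕ) (hφ0 : φ 0 = 0) (hφm : φ m = q)
    (hφmono : ∀ j < m, φ j < φ (j + 1)) (hφD : ∀ j ≤ m, F (φ j) = D j) :
    |RiemannSum x w q F - RiemannSum x w m D|
      ≤ Cx * Cw * 2 ^ (α + β) * youngZ (α + β) * δ ^ (α + β - 1) * (D m - D 0) := by
  set θ := α + β with hθdef
  set K := Cx * Cw * 2 ^ θ * youngZ θ with hKdef
  have hK0 : 0 ≤ K := by
    have := youngZ_nonneg (show (1:ℝ) < θ from hαβ)
    positivity
  have hδ0 : 0 < δ := lt_of_lt_of_le (by linarith [hincr 0 hm]) (hδ 0 hm)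
  -- φ is ≤ q on [0, m]
  have hφle : ∀ j ≤ m, φ j ≤ q := by
    intro j hj
    have hcast := diss_mono (D := fun k => (φ k : ℝ)) (m := m)
      (fun k hk => by simpa using hφmono k hk) hj (le_refl m)
    have h2 : (φ j : ℝ) ≤ (φ m : ℝ) := hcast
    rw [← hφm]
    exact_mod_cast h2
  set f : ℕ → ℝ := fun k => x (F k) * (w (F (k + 1)) - w (F k)) with hfdef
  have hsplit : RiemannSum x w q F
      = ∑ j ∈ range m, ∑ k ∈ Finset.Ico (φ j) (φ (j + 1)), f k := by
    rw [RiemannSum, ← hφm]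
    exact sum_blocks f φ hφ0 m (fun j hj => (hφmono j hj).le)
  have hblock : ∀ j < m,
      |(∑ k ∈ Finset.Ico (φ j) (φ (j + 1)), f k) - x (D j) * (w (D (j + 1)) - w (D j))|
        ≤ K * δ ^ (θ - 1) * (D (j + 1) - D j) := by
    intro j hj
    set G : ℕ → ℝ := fun i => F (φ j + i) with hGdef
    set mG := φ (j + 1) - φ j with hmGdef
    have hmG0 : 0 < mG := by have := hφmono j hj; omega
    have hjq : φ (j + 1) ≤ q := hφle (j + 1) (by omega)
    have hG0 : G 0 = D j := by
      simp only [hGdef, Nat.add_zero]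
      exact hφD j (by omega)
    have hGm : G mG = D (j + 1) := by
      have : φ j + mG = φ (j + 1) := by have := hφmono j hj; omega
      simp only [hGdef, this]
      exact hφD (j + 1) (by omega)
    have hGincr : ∀ i < mG, G i < G (i + 1) := by
      intro i hiG
      exact hF (φ j + i) (by omega)
    have hGmem : ∀ i ≤ mG, G i ∈ Set.Icc (0 : ℝ) T := by
      intro i hiG
      exact hFmem (φ j + i) (by omega)
    have hico : ∑ k ∈ Finset.Ico (φ j) (φ (j + 1)), f k = RiemannSum x w mG G := by
      rw [Finset.sum_Ico_eq_sum_range, RiemannSum]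
      rfl
    have hym := young_max x w T Cx Cw α β hCx hCw hα hβ hαβ hx hw mG G hmG0 hGmem hGincr
    rw [hG0, hGm] at hym
    have hgap0 : 0 < D (j + 1) - D j := by linarith [hincr j hj]
    have hrpow : (D (j + 1) - D j) ^ θ ≤ δ ^ (θ - 1) * (D (j + 1) - D j) := by
      have expand := Real.rpow_add_one (ne_of_gt hgap0) (θ - 1)
      rw [show θ - 1 + 1 = θ by ring] at expand
      rw [expand]
      apply mul_le_mul_of_nonneg_right _ (by linarith)
      exact Real.rpow_le_rpow hgap0.le (hδ j hj) (by linarith [hαβ])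
    rw [hico]
    calc |RiemannSum x w mG G - x (D j) * (w (D (j + 1)) - w (D j))|
        ≤ K * (D (j + 1) - D j) ^ θ := hym
    _ ≤ K * (δ ^ (θ - 1) * (D (j + 1) - D j)) := mul_le_mul_of_nonneg_left hrpow hK0
    _ = K * δ ^ (θ - 1) * (D (j + 1) - D j) := by ring
  calc |RiemannSum x w q F - RiemannSum x w m D|
      = |∑ j ∈ range m,
          ((∑ k ∈ Finset.Ico (φ j) (φ (j + 1)), f k) - x (D j) * (w (D (j + 1)) - w (D j)))| := by
        rw [hsplit, RiemannSum, Finset.sum_sub_distrib]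
  _ ≤ ∑ j ∈ range m,
        |(∑ k ∈ Finset.Ico (φ j) (φ (j + 1)), f k) - x (D j) * (w (D (j + 1)) - w (D j))| :=
        Finset.abs_sum_le_sum_abs _ _
  _ ≤ ∑ j ∈ range m, K * δ ^ (θ - 1) * (D (j + 1) - D j) :=
        Finset.sum_le_sum (fun j hj => hblock j (Finset.mem_range.mp hj))
  _ = K * δ ^ (θ - 1) * (D m - D 0) := by
        rw [← Finset.mul_sum, Finset.sum_range_sub D]

lemma merge_exists (s t : ℝ) (hst : s < t) (m p : ℕ) (D E : ℕ → ℝ)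
    (hDd : IsDissection s t m D) (hEd : IsDissection s t p E) :
    ∃ (q : ℕ) (F : ℕ → ℝ) (φ ψ : ℕ → ℕ),
      0 < q ∧ (∀ k < q, F k < F (k + 1)) ∧ (∀ k ≤ q, s ≤ F k ∧ F k ≤ t) ∧
      φ 0 = 0 ∧ φ m = q ∧ (∀ j < m, φ j < φ (j + 1)) ∧ (∀ j ≤ m, F (φ j) = D j) ∧
      ψ 0 = 0 ∧ ψ p = q ∧ (∀ j < p, ψ j < ψ (j + 1)) ∧ (∀ j ≤ p, F (ψ j) = E j) := by
  obtain ⟨hm, hD0, hDm, hDi⟩ := hDd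
  obtain ⟨hp, hE0, hEp, hEi⟩ := hEd
  classical
  set S : Finset ℝ := ((range (m + 1)).image D) ∪ ((range (p + 1)).image E) with hSdef
  have hDmem : ∀ j ≤ m, D j ∈ S := by
    intro j hj
    exact Finset.mem_union_left _ (Finset.mem_image_of_mem D (Finset.mem_range.mpr (by omega)))
  have hEmem : ∀ j ≤ p, E j ∈ S := by
    intro j hj
    exact Finset.mem_union_right _ (Finset.mem_image_of_mem E (Finset.mem_range.mpr (by omega)))
  have hlb : ∀ u ∈ S, s ≤ u := by
    intro u hu
    rcases Finset.mem_union.mp hu with h | h <;>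
      obtain ⟨j, hj, rfl⟩ := Finset.mem_image.mp h
    · rw [← hD0]
      exact diss_mono hDi (Nat.zero_le j) (Nat.lt_succ_iff.mp (Finset.mem_range.mp hj))
    · rw [← hE0]
      exact diss_mono hEi (Nat.zero_le j) (Nat.lt_succ_iff.mp (Finset.mem_range.mp hj))
  have hub : ∀ u ∈ S, u ≤ t := by
    intro u hu
    rcases Finset.mem_union.mp hu with h | h <;>
      obtain ⟨j, hj, rfl⟩ := Finset.mem_image.mp h
    · rw [← hDm]
      exact diss_mono hDi (Nat.lt_succ_iff.mp (Finset.mem_range.mp hj)) (le_refl m)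
    · rw [← hEp]
      exact diss_mono hEi (Nat.lt_succ_iff.mp (Finset.mem_range.mp hj)) (le_refl p)
  set n := S.card with hndef
  have hn2 : 2 ≤ n := by
    apply Finset.one_lt_card.mpr
    exact ⟨s, by rw [← hD0]; exact hDmem 0 (by omega), t,
      by rw [← hDm]; exact hDmem m (le_refl m), ne_of_lt hst⟩
  set iso := S.orderIsoOfFin (rfl : S.card = n) with hisodef
  set F : ℕ → ℝ := fun k => if h : k < n then (iso ⟨k, h⟩ : ℝ) else 0 with hFdef
  set φ : ℕ → ℕ := fun j => if h : D j ∈ S then (iso.symm ⟨D j, h⟩ : ℕ) else 0 with hφdef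
  set ψ : ℕ → ℕ := fun j => if h : E j ∈ S then (iso.symm ⟨E j, h⟩ : ℕ) else 0 with hψdef
  have hFval : ∀ (k : ℕ) (h : k < n), F k = (iso ⟨k, h⟩ : ℝ) := by
    intro k h; simp only [hFdef]; rw [dif_pos h]
  have hφval : ∀ (j : ℕ) (hj : j ≤ m),
      φ j = ((iso.symm ⟨D j, hDmem j hj⟩ : Fin n) : ℕ) := by
    intro j hj; simp only [hφdef]; rw [dif_pos (hDmem j hj)]
  have hψval : ∀ (j : ℕ) (hj : j ≤ p),
      ψ j = ((iso.symm ⟨E j, hEmem j hj⟩ : Fin n) : ℕ) := by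
    intro j hj; simp only [hψdef]; rw [dif_pos (hEmem j hj)]
  have hFφ : ∀ j ≤ m, F (φ j) = D j := by
    intro j hj
    rw [hφval j hj, hFval _ (Fin.isLt _)]
    simp
  have hFψ : ∀ j ≤ p, F (ψ j) = E j := by
    intro j hj
    rw [hψval j hj, hFval _ (Fin.isLt _)]
    simp
  have hidx_min : ∀ (u : ℝ) (hu : u ∈ S), u = s → ((iso.symm ⟨u, hu⟩ : Fin n) : ℕ) = 0 := by
    intro u hu hus
    have h1 : iso (iso.symm ⟨u, hu⟩) ≤ iso ⟨0, by omega⟩ := by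
      rw [OrderIso.apply_symm_apply]
      exact Subtype.mk_le_mk.mpr (by rw [hus]; exact hlb _ (iso ⟨0, by omega⟩).2)
    have h2 := iso.le_iff_le.mp h1
    have h3 := Fin.le_def.mp h2
    simpa using h3
  have hidx_max : ∀ (u : ℝ) (hu : u ∈ S), u = t →
      ((iso.symm ⟨u, hu⟩ : Fin n) : ℕ) = n - 1 := by
    intro u hu hut
    have h1 : iso ⟨n - 1, by omega⟩ ≤ iso (iso.symm ⟨u, hu⟩) := by
      rw [OrderIso.apply_symm_apply]
      exact Subtype.mk_le_mk.mpr (by rw [hut]; exact hub _ (iso ⟨n - 1, by omega⟩).2)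
    have h2 := iso.le_iff_le.mp h1
    have h3 := Fin.le_def.mp h2
    simp only at h3
    have h4 := (iso.symm ⟨u, hu⟩).isLt
    omega
  refine ⟨n - 1, F, φ, ψ, by omega, ?_, ?_, ?_, ?_, ?_, ?_, ?_, ?_, ?_, ?_⟩
  · -- F strictly increasing
    intro k hk
    rw [hFval k (by omega), hFval (k + 1) (by omega)]
    have : (⟨k, by omega⟩ : Fin n) < ⟨k + 1, by omega⟩ := by
      rw [Fin.mk_lt_mk]; omega
    exact iso.lt_iff_lt.mpr this
  · -- bounds
    intro k hk
    rw [hFval k (by omega)]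
    exact ⟨hlb _ (iso ⟨k, by omega⟩).2, hub _ (iso ⟨k, by omega⟩).2⟩
  · -- φ 0 = 0
    rw [hφval 0 (by omega)]
    exact hidx_min _ _ hD0
  · -- φ m = n - 1
    rw [hφval m (le_refl m)]
    exact hidx_max _ _ hDm
  · -- φ strict mono
    intro j hj
    rw [hφval j (by omega), hφval (j + 1) (by omega)]
    have hlt : (⟨D j, hDmem j (by omega)⟩ : S) < ⟨D (j + 1), hDmem (j + 1) (by omega)⟩ :=
      Subtype.mk_lt_mk.mpr (hDi j hj)
    exact Fin.lt_def.mp (iso.symm.lt_iff_lt.mpr hlt)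
  · exact hFφ
  · -- ψ 0 = 0
    rw [hψval 0 (by omega)]
    exact hidx_min _ _ hE0
  · -- ψ p = n - 1
    rw [hψval p (le_refl p)]
    exact hidx_max _ _ hEp
  · -- ψ strict mono
    intro j hj
    rw [hψval j (by omega), hψval (j + 1) (by omega)]
    have hlt : (⟨E j, hEmem j (by omega)⟩ : S) < ⟨E (j + 1), hEmem (j + 1) (by omega)⟩ :=
      Subtype.mk_lt_mk.mpr (hEi j hj)
    exact Fin.lt_def.mp (iso.symm.lt_iff_lt.mpr hlt)
  · exact hFψ

lemma diss_mem_Icc {s t T : ℝ} (hs : 0 ≤ s) (ht : t ≤ T) {m : ℕ} {D : ℕ → ℝ}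
    (hDd : IsDissection s t m D) : ∀ k ≤ m, D k ∈ Set.Icc (0 : ℝ) T := by
  obtain ⟨hm, hD0, hDm, hDi⟩ := hDd
  intro k hk
  constructor
  · have := diss_mono hDi (Nat.zero_le k) hk
    rw [hD0] at this; linarith
  · have := diss_mono hDi hk (le_refl m)
    rw [hDm] at this; linarith

lemma RS_diff_bound (x w : ℝ → ℝ) (T Cx Cw α β : ℝ) (hCx : 0 ≤ Cx) (hCw : 0 ≤ Cw)
    (hα : 0 < α) (hβ : 0 < β) (hαβ : 1 < α + β)
    (hx : ∀ s ∈ Set.Icc (0 : ℝ) T, ∀ t ∈ Set.Icc (0 : ℝ) T, |x t - x s| ≤ Cx * |t - s| ^ α)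
    (hw : ∀ s ∈ Set.Icc (0 : ℝ) T, ∀ t ∈ Set.Icc (0 : ℝ) T, |w t - w s| ≤ Cw * |t - s| ^ β)
    (s t : ℝ) (hs : 0 ≤ s) (ht : t ≤ T)
    (m : ℕ) (D : ℕ → ℝ) (hDd : IsDissection s t m D)
    (p : ℕ) (E : ℕ → ℝ) (hEd : IsDissection s t p E)
    (δD δE : ℝ) (hδD : ∀ k < m, D (k + 1) - D k ≤ δD) (hδE : ∀ k < p, E (k + 1) - E k ≤ δE) :
    |RiemannSum x w m D - RiemannSum x w p E|
      ≤ Cx * Cw * 2 ^ (α + β) * youngZ (α + β)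
          * (δD ^ (α + β - 1) + δE ^ (α + β - 1)) * (t - s) := by
  have hst : s < t := by
    obtain ⟨hm, hD0, hDm, hDi⟩ := hDd
    rw [← hD0, ← hDm]
    exact diss_strict hDi hm (le_refl m)
  obtain ⟨q, F, φ, ψ, hq, hF, hFb, hφ0, hφm, hφmono, hφD, hψ0, hψp, hψmono, hψE⟩ :=
    merge_exists s t hst m p D E hDd hEd
  have hFmem : ∀ k ≤ q, F k ∈ Set.Icc (0 : ℝ) T := by
    intro k hk
    obtain ⟨h1, h2⟩ := hFb k hk
    exact ⟨by linarith, by linarith⟩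
  obtain ⟨hm, hD0, hDm, hDi⟩ := hDd
  obtain ⟨hp, hE0, hEp, hEi⟩ := hEd
  have hb1 := refine_bound x w T Cx Cw α β hCx hCw hα hβ hαβ hx hw m D hm
    (diss_mem_Icc hs ht ⟨hm, hD0, hDm, hDi⟩) hDi δD hδD q F hF hFmem φ hφ0 hφm hφmono hφD
  have hb2 := refine_bound x w T Cx Cw α β hCx hCw hα hβ hαβ hx hw p E hp
    (diss_mem_Icc hs ht ⟨hp, hE0, hEp, hEi⟩) hEi δE hδE q F hF hFmem ψ hψ0 hψp hψmono hψE
  rw [hD0, hDm] at hb1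
  rw [hE0, hEp] at hb2
  have tri : |RiemannSum x w m D - RiemannSum x w p E|
      ≤ |RiemannSum x w q F - RiemannSum x w m D|
        + |RiemannSum x w q F - RiemannSum x w p E| := by
    have := abs_sub (RiemannSum x w q F - RiemannSum x w m D)
      (RiemannSum x w q F - RiemannSum x w p E)
    have heq : RiemannSum x w q F - RiemannSum x w m D
        - (RiemannSum x w q F - RiemannSum x w p E)
        = RiemannSum x w p E - RiemannSum x w m D := by ring
    rw [heq] at this
    rw [abs_sub_comm]
    exact this
  calc |RiemannSum x w m D - RiemannSum x w p E|
      ≤ Cx * Cw * 2 ^ (α + β) * youngZ (α + β) * δD ^ (α + β - 1) * (t - s)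
        + Cx * Cw * 2 ^ (α + β) * youngZ (α + β) * δE ^ (α + β - 1) * (t - s) := by
        linarith [tri, hb1, hb2]
  _ = Cx * Cw * 2 ^ (α + β) * youngZ (α + β)
        * (δD ^ (α + β - 1) + δE ^ (α + β - 1)) * (t - s) := by ring

noncomputable def unif (s t : ℝ) (n : ℕ) (k : ℕ) : ℝ := s + (t - s) * k / (n + 1)

lemma unif_zero (s t : ℝ) (n : ℕ) : unif s t n 0 = s := by simp [unif]

lemma unif_last (s t : ℝ) (n : ℕ) : unif s t n (n + 1) = t := by
  have h : ((n : ℝ) + 1) ≠ 0 := by positivity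
  simp only [unif]; push_cast; field_simp; ring

lemma unif_gap (s t : ℝ) (n k : ℕ) :
    unif s t n (k + 1) - unif s t n k = (t - s) / (n + 1) := by
  have h : ((n : ℝ) + 1) ≠ 0 := by positivity
  simp only [unif]; push_cast; field_simp
  ring

lemma unif_diss {s t : ℝ} (hst : s < t) (n : ℕ) : IsDissection s t (n + 1) (unif s t n) := by
  refine ⟨by omega, unif_zero s t n, ?_, ?_⟩
  · push_cast [unif_last]; rfl
  · intro k hk
    have := unif_gap s t n k
    have hpos : (0:ℝ) < (t - s) / (n + 1) := div_pos (by linarith) (by positivity)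
    linarith

lemma gap_tendsto (s t : ℝ) (K : ℝ) (θ : ℝ) (hθ : 1 < θ) :
    Tendsto (fun N : ℕ => K * ((t - s) / (N + 1)) ^ (θ - 1) * (t - s)) atTop (nhds 0) := by
  have h1 : Tendsto (fun N : ℕ => (t - s) / (N + 1)) atTop (nhds 0) := by
    have := tendsto_one_div_add_atTop_nhds_zero_nat.const_mul (t - s)
    rw [mul_zero] at this
    convert this using 2 with N
    ring
  have hc : ContinuousAt (fun y : ℝ => y ^ (θ - 1)) 0 :=
    Real.continuousAt_rpow_const 0 (θ - 1) (Or.inr (by linarith))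
  have h2 := (hc.tendsto.comp h1)
  rw [Real.zero_rpow (by intro h; linarith : θ - 1 ≠ 0)] at h2
  have h3 := (h2.const_mul K).mul_const (t - s)
  simpa using h3

lemma young_cauchy (x w : ℝ → ℝ) (T Cx Cw α β : ℝ) (hCx : 0 ≤ Cx) (hCw : 0 ≤ Cw)
    (hα : 0 < α) (hβ : 0 < β) (hαβ : 1 < α + β)
    (hx : ∀ s ∈ Set.Icc (0 : ℝ) T, ∀ t ∈ Set.Icc (0 : ℝ) T, |x t - x s| ≤ Cx * |t - s| ^ α)
    (hw : ∀ s ∈ Set.Icc (0 : ℝ) T, ∀ t ∈ Set.Icc (0 : ℝ) T, |w t - w s| ≤ Cw * |t - s| ^ β)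
    (s t : ℝ) (hs : 0 ≤ s) (hst : s < t) (ht : t ≤ T) :
    CauchySeq (fun n => RiemannSum x w (n + 1) (unif s t n)) := by
  set θ := α + β with hθdef
  set K := Cx * Cw * 2 ^ θ * youngZ θ with hKdef
  have hK0 : 0 ≤ K := by
    have := youngZ_nonneg (show (1:ℝ) < θ from hαβ)
    positivity
  set g : ℕ → ℝ := fun n => (t - s) / (n + 1) with hgdef
  have hg0 : ∀ n : ℕ, 0 < g n := fun n => div_pos (by linarith) (by positivity)
  have hganti : ∀ N n : ℕ, N ≤ n → g n ≤ g N := by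
    intro N n hNn
    apply div_le_div_of_nonneg_left (by linarith) (by positivity)
    have : (N : ℝ) ≤ n := by exact_mod_cast hNn
    linarith
  apply cauchySeq_of_le_tendsto_0 (fun N => K * (g N ^ (θ - 1) + g N ^ (θ - 1)) * (t - s))
  · intro n m N hn hm
    rw [Real.dist_eq]
    have hb := RS_diff_bound x w T Cx Cw α β hCx hCw hα hβ hαβ hx hw s t hs ht
      (n + 1) (unif s t n) (unif_diss hst n) (m + 1) (unif s t m) (unif_diss hst m)
      (g n) (g m) (fun k _ => le_of_eq (unif_gap s t n k))
      (fun k _ => le_of_eq (unif_gap s t m k))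
    refine hb.trans ?_
    have hmono : ∀ j : ℕ, N ≤ j → g j ^ (θ - 1) ≤ g N ^ (θ - 1) := fun j hj =>
      Real.rpow_le_rpow (hg0 j).le (hganti N j hj) (by linarith)
    have hsum : g n ^ (θ - 1) + g m ^ (θ - 1) ≤ g N ^ (θ - 1) + g N ^ (θ - 1) := by
      linarith [hmono n hn, hmono m hm]
    apply mul_le_mul_of_nonneg_right _ (by linarith)
    exact mul_le_mul_of_nonneg_left hsum hK0
  · have h := gap_tendsto s t (2 * K) θ hαβ
    convert h using 2 with N
    rw [hgdef]
    ring

lemma young_dist_lim (x w : ℝ → ℝ) (T Cx Cw α β : ℝ) (hCx : 0 ≤ Cx) (hCw : 0 ≤ Cw)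
    (hα : 0 < α) (hβ : 0 < β) (hαβ : 1 < α + β)
    (hx : ∀ s ∈ Set.Icc (0 : ℝ) T, ∀ t ∈ Set.Icc (0 : ℝ) T, |x t - x s| ≤ Cx * |t - s| ^ α)
    (hw : ∀ s ∈ Set.Icc (0 : ℝ) T, ∀ t ∈ Set.Icc (0 : ℝ) T, |w t - w s| ≤ Cw * |t - s| ^ β)
    (s t : ℝ) (hs : 0 ≤ s) (hst : s < t) (ht : t ≤ T)
    (δ : ℝ) (m : ℕ) (D : ℕ → ℝ) (hDd : IsDissection s t m D)
    (hδ : ∀ k < m, D (k + 1) - D k ≤ δ) :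
    dist (RiemannSum x w m D) (limUnder atTop (fun n => RiemannSum x w (n + 1) (unif s t n)))
      ≤ Cx * Cw * 2 ^ (α + β) * youngZ (α + β) * δ ^ (α + β - 1) * (t - s) := by
  set θ := α + β with hθdef
  set K := Cx * Cw * 2 ^ θ * youngZ θ with hKdef
  set u : ℕ → ℝ := fun n => RiemannSum x w (n + 1) (unif s t n) with hudef
  set L := limUnder atTop u with hLdef
  have hu : Tendsto u atTop (nhds L) :=
    (young_cauchy x w T Cx Cw α β hCx hCw hα hβ hαβ hx hw s t hs hst ht).tendsto_limUnder
  have hd : Tendsto (fun p => dist (RiemannSum x w m D) (u p)) atTop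
      (nhds (dist (RiemannSum x w m D) L)) := tendsto_const_nhds.dist hu
  have hc : Tendsto (fun p : ℕ => K * δ ^ (θ - 1) * (t - s)
      + K * ((t - s) / (p + 1)) ^ (θ - 1) * (t - s)) atTop
      (nhds (K * δ ^ (θ - 1) * (t - s) + 0)) :=
    tendsto_const_nhds.add (gap_tendsto s t K θ hαβ)
  rw [add_zero] at hc
  refine le_of_tendsto_of_tendsto' hd hc ?_
  intro p
  rw [Real.dist_eq]
  have hb := RS_diff_bound x w T Cx Cw α β hCx hCw hα hβ hαβ hx hw s t hs ht
    m D hDd (p + 1) (unif s t p) (unif_diss hst p)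
    δ ((t - s) / (p + 1)) hδ (fun k _ => le_of_eq (unif_gap s t p k))
  refine hb.trans (le_of_eq ?_)
  rw [← hKdef]
  ring

lemma young_tendsto (x w : ℝ → ℝ) (T Cx Cw α β : ℝ) (hCx : 0 ≤ Cx) (hCw : 0 ≤ Cw)
    (hα : 0 < α) (hβ : 0 < β) (hαβ : 1 < α + β)
    (hx : ∀ s ∈ Set.Icc (0 : ℝ) T, ∀ t ∈ Set.Icc (0 : ℝ) T, |x t - x s| ≤ Cx * |t - s| ^ α)
    (hw : ∀ s ∈ Set.Icc (0 : ℝ) T, ∀ t ∈ Set.Icc (0 : ℝ) T, |w t - w s| ≤ Cw * |t - s| ^ β)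
    (s t : ℝ) (hs : 0 ≤ s) (hst : s < t) (ht : t ≤ T)
    (mseq : ℕ → ℕ) (Dseq : ℕ → ℕ → ℝ)
    (hdiss : ∀ n, IsDissection s t (mseq n) (Dseq n))
    (hmesh : ∀ ε > 0, ∃ N : ℕ, ∀ n ≥ N, ∀ k < mseq n, Dseq n (k + 1) - Dseq n k < ε) :
    Tendsto (fun n => RiemannSum x w (mseq n) (Dseq n)) atTop
      (nhds (limUnder atTop (fun n => RiemannSum x w (n + 1) (unif s t n)))) := by
  set θ := α + β with hθdef
  set K := Cx * Cw * 2 ^ θ * youngZ θ with hKdef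
  rw [Metric.tendsto_atTop]
  intro ε hε
  have hto := gap_tendsto s t K θ hαβ
  have hev := (hto.eventually (eventually_lt_nhds hε)).exists
  obtain ⟨p₀, hp₀⟩ := hev
  set δ := (t - s) / (p₀ + 1) with hδdef
  have hδ0 : 0 < δ := div_pos (by linarith) (by positivity)
  obtain ⟨N, hN⟩ := hmesh δ hδ0
  refine ⟨N, fun n hn => ?_⟩
  have hb := young_dist_lim x w T Cx Cw α β hCx hCw hα hβ hαβ hx hw s t hs hst ht
    δ (mseq n) (Dseq n) (hdiss n) (fun k hk => (hN n hn k hk).le)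
  exact lt_of_le_of_lt hb hp₀

lemma tendsto_div_add_one (c : ℝ) : Tendsto (fun n : ℕ => c / (n + 1)) atTop (nhds 0) := by
  have := tendsto_one_div_add_atTop_nhds_zero_nat.const_mul c
  rw [mul_zero] at this
  convert this using 2 with N
  ring

lemma young_add (x w : ℝ → ℝ) (T Cx Cw α β : ℝ) (hCx : 0 ≤ Cx) (hCw : 0 ≤ Cw)
    (hα : 0 < α) (hβ : 0 < β) (hαβ : 1 < α + β)
    (hx : ∀ s ∈ Set.Icc (0 : ℝ) T, ∀ t ∈ Set.Icc (0 : ℝ) T, |x t - x s| ≤ Cx * |t - s| ^ α)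
    (hw : ∀ s ∈ Set.Icc (0 : ℝ) T, ∀ t ∈ Set.Icc (0 : ℝ) T, |w t - w s| ≤ Cw * |t - s| ^ β)
    (r s t : ℝ) (hr : 0 ≤ r) (hrs : r < s) (hst : s < t) (ht : t ≤ T) :
    limUnder atTop (fun n => RiemannSum x w (n + 1) (unif r s n))
      + limUnder atTop (fun n => RiemannSum x w (n + 1) (unif s t n))
      = limUnder atTop (fun n => RiemannSum x w (n + 1) (unif r t n)) := by
  have hs0 : 0 ≤ s := by linarith
  have hsT : s ≤ T := by linarith
  set Dseq : ℕ → ℕ → ℝ :=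
    fun n k => if k ≤ n + 1 then unif r s n k else unif s t n (k - (n + 1)) with hDdef
  have hDval1 : ∀ n k, k ≤ n + 1 → Dseq n k = unif r s n k := by
    intro n k hk; simp only [hDdef]; rw [if_pos hk]
  have hDval2 : ∀ n k, n + 1 ≤ k → Dseq n k = unif s t n (k - (n + 1)) := by
    intro n k hk
    rcases Nat.eq_or_lt_of_le hk with h | h
    · rw [← h]
      simp only [hDdef]
      rw [if_pos (le_refl _), Nat.sub_self, unif_zero]
      have := unif_last r s n
      rw [this]
    · simp only [hDdef]; rw [if_neg (by omega)]
  have hdiss : ∀ n, IsDissection r t (2 * n + 2) (Dseq n) := by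
    intro n
    refine ⟨by omega, ?_, ?_, ?_⟩
    · rw [hDval1 n 0 (by omega), unif_zero]
    · rw [hDval2 n (2 * n + 2) (by omega)]
      have : 2 * n + 2 - (n + 1) = n + 1 := by omega
      rw [this, unif_last]
    · intro k hk
      rcases lt_trichotomy k (n + 1) with h1 | h1 | h1
      · rw [hDval1 n k (by omega), hDval1 n (k + 1) (by omega)]
        have := unif_gap r s n k
        have hpos : (0:ℝ) < (s - r) / (n + 1) := div_pos (by linarith) (by positivity)
        linarith
      · subst h1
        rw [hDval1 n (n + 1) (le_refl _), hDval2 n (n + 2) (by omega), unif_last]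
        have h2 : n + 2 - (n + 1) = 1 := by omega
        rw [h2]
        have := unif_gap s t n 0
        rw [unif_zero] at this
        have hpos : (0:ℝ) < (t - s) / (n + 1) := div_pos (by linarith) (by positivity)
        linarith
      · rw [hDval2 n k (by omega), hDval2 n (k + 1) (by omega)]
        have h2 : k + 1 - (n + 1) = (k - (n + 1)) + 1 := by omega
        rw [h2]
        have := unif_gap s t n (k - (n + 1))
        have hpos : (0:ℝ) < (t - s) / (n + 1) := div_pos (by linarith) (by positivity)
        linarith
  have hmesh : ∀ ε > 0, ∃ N : ℕ, ∀ n ≥ N, ∀ k < 2 * n + 2,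
      Dseq n (k + 1) - Dseq n k < ε := by
    intro ε hε
    have h1 := (tendsto_div_add_one (t - r)).eventually (eventually_lt_nhds hε)
    obtain ⟨N, hN⟩ := eventually_atTop.mp h1
    refine ⟨N, fun n hn k hk => ?_⟩
    have hlt : (t - r) / (n + 1) < ε := hN n hn
    have hgap : Dseq n (k + 1) - Dseq n k ≤ (t - r) / (n + 1) := by
      rcases lt_trichotomy k (n + 1) with h1 | h1 | h1
      · rw [hDval1 n k (by omega), hDval1 n (k + 1) (by omega), unif_gap]
        exact div_le_div_of_nonneg_right (by linarith) (by positivity)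
      · subst h1
        rw [hDval1 n (n + 1) (le_refl _), hDval2 n (n + 2) (by omega), unif_last]
        have h2 : n + 2 - (n + 1) = 1 := by omega
        rw [h2]
        have := unif_gap s t n 0
        rw [unif_zero] at this
        have : unif s t n 1 - s = (t - s) / (n + 1) := by linarith
        rw [this]
        exact div_le_div_of_nonneg_right (by linarith) (by positivity)
      · rw [hDval2 n k (by omega), hDval2 n (k + 1) (by omega)]
        have h2 : k + 1 - (n + 1) = (k - (n + 1)) + 1 := by omega
        rw [h2, unif_gap]
        exact div_le_div_of_nonneg_right (by linarith) (by positivity)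
    linarith
  have hsplit : ∀ n, RiemannSum x w (2 * n + 2) (Dseq n)
      = RiemannSum x w (n + 1) (unif r s n) + RiemannSum x w (n + 1) (unif s t n) := by
    intro n
    rw [RiemannSum, range_eq_Ico,
      ← Finset.sum_Ico_consecutive _ (by omega : 0 ≤ n + 1) (by omega : n + 1 ≤ 2 * n + 2)]
    congr 1
    · rw [← range_eq_Ico, RiemannSum]
      refine Finset.sum_congr rfl (fun k hk => ?_)
      have hk' := Finset.mem_range.mp hk
      rw [hDval1 n k (by omega), hDval1 n (k + 1) (by omega)]
    · rw [Finset.sum_Ico_eq_sum_range, RiemannSum]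
      have hcard : 2 * n + 2 - (n + 1) = n + 1 := by omega
      rw [hcard]
      refine Finset.sum_congr rfl (fun i hi => ?_)
      have hi' := Finset.mem_range.mp hi
      have e1 : Dseq n (n + 1 + i) = unif s t n i := by
        rw [hDval2 n (n + 1 + i) (by omega)]
        congr 1
        omega
      have e2 : Dseq n (n + 1 + i + 1) = unif s t n (i + 1) := by
        rw [hDval2 n (n + 1 + i + 1) (by omega)]
        congr 1
        omega
      rw [e1, e2]
  have h1 : Tendsto (fun n => RiemannSum x w (2 * n + 2) (Dseq n)) atTop
      (nhds (limUnder atTop (fun n => RiemannSum x w (n + 1) (unif r t n)))) :=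
    young_tendsto x w T Cx Cw α β hCx hCw hα hβ hαβ hx hw r t hr (by linarith) ht
      (fun n => 2 * n + 2) Dseq hdiss hmesh
  have h2 : Tendsto (fun n => RiemannSum x w (2 * n + 2) (Dseq n)) atTop
      (nhds (limUnder atTop (fun n => RiemannSum x w (n + 1) (unif r s n))
        + limUnder atTop (fun n => RiemannSum x w (n + 1) (unif s t n)))) := by
    have ha : Tendsto (fun n => RiemannSum x w (n + 1) (unif r s n)) atTop
        (nhds (limUnder atTop (fun n => RiemannSum x w (n + 1) (unif r s n)))) :=
      (young_cauchy x w T Cx Cw α β hCx hCw hα hβ hαβ hx hw r s hr hrs hsT).tendsto_limUnder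
    have hb : Tendsto (fun n => RiemannSum x w (n + 1) (unif s t n)) atTop
        (nhds (limUnder atTop (fun n => RiemannSum x w (n + 1) (unif s t n)))) :=
      (young_cauchy x w T Cx Cw α β hCx hCw hα hβ hαβ hx hw s t hs0 hst ht).tendsto_limUnder
    have := ha.add hb
    apply Tendsto.congr _ this
    intro n
    exact (hsplit n).symm
  exact tendsto_nhds_unique h2 h1

lemma young_lim_bound (x w : ℝ → ℝ) (T Cx Cw α β : ℝ) (hCx : 0 ≤ Cx) (hCw : 0 ≤ Cw)
    (hα : 0 < α) (hβ : 0 < β) (hαβ : 1 < α + β)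
    (hx : ∀ s ∈ Set.Icc (0 : ℝ) T, ∀ t ∈ Set.Icc (0 : ℝ) T, |x t - x s| ≤ Cx * |t - s| ^ α)
    (hw : ∀ s ∈ Set.Icc (0 : ℝ) T, ∀ t ∈ Set.Icc (0 : ℝ) T, |w t - w s| ≤ Cw * |t - s| ^ β)
    (s t : ℝ) (hs : 0 ≤ s) (hst : s < t) (ht : t ≤ T) :
    |limUnder atTop (fun n => RiemannSum x w (n + 1) (unif s t n)) - x s * (w t - w s)|
      ≤ Cx * Cw * 2 ^ (α + β) * youngZ (α + β) * (t - s) ^ (α + β) := by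
  set u : ℕ → ℝ := fun n => RiemannSum x w (n + 1) (unif s t n) with hudef
  have hu : Tendsto u atTop (nhds (limUnder atTop u)) :=
    (young_cauchy x w T Cx Cw α β hCx hCw hα hβ hαβ hx hw s t hs hst ht).tendsto_limUnder
  have habs : Tendsto (fun n => |u n - x s * (w t - w s)|) atTop
      (nhds |limUnder atTop u - x s * (w t - w s)|) :=
    (hu.sub tendsto_const_nhds).abs
  apply le_of_tendsto' habs
  intro n
  have hd := unif_diss hst n
  have hym := young_max x w T Cx Cw α β hCx hCw hα hβ hαβ hx hw (n + 1) (unif s t n)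
    (by omega) (diss_mem_Icc hs ht hd) hd.2.2.2
  rw [unif_zero, hd.2.2.1] at hym
  exact hym

lemma unif_mesh {s t : ℝ} (hst : s < t) : ∀ ε > 0, ∃ N : ℕ, ∀ n ≥ N, ∀ k < n + 1,
    unif s t n (k + 1) - unif s t n k < ε := by
  intro ε hε
  obtain ⟨N, hN⟩ :=
    eventually_atTop.mp ((tendsto_div_add_one (t - s)).eventually (eventually_lt_nhds hε))
  exact ⟨N, fun n hn k _ => by rw [unif_gap]; exact hN n hn⟩

noncomputable def youngI (x w : ℝ → ℝ) (a b : ℝ) : ℝ :=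
  limUnder atTop (fun n => RiemannSum x w (n + 1) (unif a b n))

noncomputable def youngJ (x w : ℝ → ℝ) (u : ℝ) : ℝ := if 0 < u then youngI x w 0 u else 0

end YoungAux

/-- Existence and uniqueness of the Young integral of an `α`-Hölder function with respect to a
`β`-Hölder function when `α + β > 1`. -/
theorem young_integral_exists_unique
    (T : ℝ) (hT : 0 < T) (x w : ℝ → ℝ) (α β : ℝ)
    (hα : α ∈ Set.Ioc (0 : ℝ) 1) (hβ : β ∈ Set.Ioc (0 : ℝ) 1) (hαβ : 1 < α + β)
    (Cx Cw : ℝ) (hCx : 0 ≤ Cx) (hCw : 0 ≤ Cw)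
    (hx : ∀ s ∈ Set.Icc (0 : ℝ) T, ∀ t ∈ Set.Icc (0 : ℝ) T, |x t - x s| ≤ Cx * |t - s| ^ α)
    (hw : ∀ s ∈ Set.Icc (0 : ℝ) T, ∀ t ∈ Set.Icc (0 : ℝ) T, |w t - w s| ≤ Cw * |t - s| ^ β) :
    (∃ J : ℝ → ℝ, IsYoungPrimitive T x w J) ∧
      ∀ J₁ J₂ : ℝ → ℝ, IsYoungPrimitive T x w J₁ → IsYoungPrimitive T x w J₂ →
        Set.EqOn J₁ J₂ (Set.Icc 0 T) := by
  obtain ⟨hα0, hα1⟩ := hα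
  obtain ⟨hβ0, hβ1⟩ := hβ
  set θ := α + β with hθdef
  set K := Cx * Cw * 2 ^ θ * youngZ θ with hKdef
  have hK0 : 0 ≤ K := by
    have := youngZ_nonneg (show (1:ℝ) < θ from hαβ)
    positivity
  set Bx := |x 0| + Cx * T ^ α with hBxdef
  have hBx : ∀ u ∈ Set.Icc (0:ℝ) T, |x u| ≤ Bx := by
    intro u hu
    have h1 := hx 0 ⟨le_refl 0, hT.le⟩ u hu
    have h2 : |u - 0| ^ α ≤ T ^ α := by
      rw [sub_zero, abs_of_nonneg hu.1]
      exact Real.rpow_le_rpow hu.1 hu.2 hα0.le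
    have h3 : |x u| ≤ |x 0| + |x u - x 0| := by
      have := abs_add_le (x 0) (x u - x 0)
      simpa using this
    have h4 : Cx * |u - 0| ^ α ≤ Cx * T ^ α := mul_le_mul_of_nonneg_left h2 hCx
    linarith
  have hJdiff : ∀ s t : ℝ, 0 ≤ s → s < t → t ≤ T →
      youngJ x w t - youngJ x w s = youngI x w s t := by
    intro s t hs hst ht
    rcases hs.eq_or_lt with rfl | hs0
    · rw [youngJ, youngJ, if_pos hst, if_neg (lt_irrefl 0), sub_zero]
    · rw [youngJ, youngJ, if_pos (by linarith), if_pos hs0]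
      have := young_add x w T Cx Cw α β hCx hCw hα0 hβ0 hαβ hx hw 0 s t (le_refl 0) hs0 hst ht
      rw [youngI, youngI, youngI]
      linarith
  have hconv : ∀ s t : ℝ, 0 ≤ s → s < t → t ≤ T →
      ∀ (mseq : ℕ → ℕ) (Dseq : ℕ → ℕ → ℝ),
        (∀ n, IsDissection s t (mseq n) (Dseq n)) →
        (∀ ε > 0, ∃ N : ℕ, ∀ n ≥ N, ∀ k < mseq n, Dseq n (k + 1) - Dseq n k < ε) →
        Tendsto (fun n => RiemannSum x w (mseq n) (Dseq n)) atTop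
          (nhds (youngJ x w t - youngJ x w s)) := by
    intro s t hs hst ht mseq Dseq hdiss hmesh
    rw [hJdiff s t hs hst ht, youngI]
    exact young_tendsto x w T Cx Cw α β hCx hCw hα0 hβ0 hαβ hx hw s t hs hst ht
      mseq Dseq hdiss hmesh
  have hbound : ∀ s t : ℝ, 0 ≤ s → s ≤ t → t ≤ T →
      |youngJ x w t - youngJ x w s| ≤ Bx * Cw * (t - s) ^ β + K * (t - s) ^ θ := by
    intro s t hs hst ht
    rcases hst.eq_or_lt with rfl | hst0
    · rw [sub_self, sub_self, abs_zero, Real.zero_rpow (ne_of_gt hβ0),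
        Real.zero_rpow (by intro h; rw [hθdef] at h; linarith)]
      simp
    · rw [hJdiff s t hs hst0 ht]
      have hlim := young_lim_bound x w T Cx Cw α β hCx hCw hα0 hβ0 hαβ hx hw s t hs hst0 ht
      rw [← youngI, ← hKdef, ← hθdef] at hlim
      have hwb : |w t - w s| ≤ Cw * (t - s) ^ β := by
        have := hw s ⟨hs, by linarith⟩ t ⟨by linarith, ht⟩
        rwa [abs_of_pos (by linarith : (0:ℝ) < t - s)] at this
      have hxs : |x s| ≤ Bx := hBx s ⟨hs, by linarith⟩
      have h1 : |youngI x w s t| ≤ |youngI x w s t - x s * (w t - w s)| + |x s * (w t - w s)| := by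
        have := abs_add_le (youngI x w s t - x s * (w t - w s)) (x s * (w t - w s))
        simpa using this
      have h2 : |x s * (w t - w s)| ≤ Bx * (Cw * (t - s) ^ β) := by
        rw [abs_mul]
        apply mul_le_mul hxs hwb (abs_nonneg _)
        have : (0:ℝ) ≤ |x s| := abs_nonneg _
        linarith
      have h3 : Bx * (Cw * (t - s) ^ β) = Bx * Cw * (t - s) ^ β := by ring
      linarith
  have hJ0 : youngJ x w 0 = 0 := by rw [youngJ, if_neg (lt_irrefl 0)]
  have hcont : ContinuousOn (youngJ x w) (Set.Icc 0 T) := by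
    intro a ha
    rw [Metric.continuousWithinAt_iff]
    intro ε hε
    have c1 : ContinuousAt (fun r : ℝ => r ^ β) 0 :=
      Real.continuousAt_rpow_const 0 β (Or.inr hβ0.le)
    have c2 : ContinuousAt (fun r : ℝ => r ^ θ) 0 :=
      Real.continuousAt_rpow_const 0 θ (Or.inr (by linarith))
    have hg : Tendsto (fun r : ℝ => Bx * Cw * r ^ β + K * r ^ θ) (nhds 0) (nhds 0) := by
      have := (c1.tendsto.const_mul (Bx * Cw)).add (c2.tendsto.const_mul K)
      simp only [Real.zero_rpow (ne_of_gt hβ0),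
        Real.zero_rpow (show θ ≠ 0 by intro h; rw [hθdef] at h; linarith),
        mul_zero, add_zero] at this
      exact this
    obtain ⟨δ, hδ0, hδ⟩ := Metric.tendsto_nhds_nhds.mp hg ε hε
    refine ⟨δ, hδ0, ?_⟩
    intro v hv hdist
    have hmod : dist (youngJ x w v) (youngJ x w a)
        ≤ Bx * Cw * (dist v a) ^ β + K * (dist v a) ^ θ := by
      rcases le_total v a with hva | hva
      · have hd : dist v a = a - v := by
          rw [Real.dist_eq, abs_sub_comm, abs_of_nonneg (by linarith : (0:ℝ) ≤ a - v)]
        rw [hd, dist_comm (youngJ x w v), Real.dist_eq]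
        exact hbound v a hv.1 hva ha.2
      · have hd : dist v a = v - a := by
          rw [Real.dist_eq, abs_of_nonneg (by linarith : (0:ℝ) ≤ v - a)]
        rw [hd, Real.dist_eq]
        exact hbound a v ha.1 hva hv.2
    have hlt : dist (Bx * Cw * (dist v a) ^ β + K * (dist v a) ^ θ) 0 < ε := by
      apply hδ
      rw [Real.dist_eq, sub_zero, abs_of_nonneg dist_nonneg]
      exact hdist
    rw [Real.dist_eq, sub_zero] at hlt
    calc dist (youngJ x w v) (youngJ x w a)
        ≤ Bx * Cw * (dist v a) ^ β + K * (dist v a) ^ θ := hmod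
    _ ≤ |Bx * Cw * (dist v a) ^ β + K * (dist v a) ^ θ| := le_abs_self _
    _ < ε := hlt
  constructor
  · exact ⟨youngJ x w, hcont, hJ0, hconv⟩
  · intro J₁ J₂ h₁ h₂ t ht
    obtain ⟨hc₁, h0₁, hlim₁⟩ := h₁
    obtain ⟨hc₂, h0₂, hlim₂⟩ := h₂
    rcases ht.1.eq_or_lt with rfl | ht0
    · rw [h0₁, h0₂]
    · have hd : ∀ n : ℕ, IsDissection 0 t (n + 1) (unif 0 t n) := fun n => unif_diss ht0 n
      have hm := unif_mesh ht0
      have t₁ := hlim₁ 0 t (le_refl 0) ht0 ht.2 (fun n => n + 1) (fun n => unif 0 t n) hd hm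
      have t₂ := hlim₂ 0 t (le_refl 0) ht0 ht.2 (fun n => n + 1) (fun n => unif 0 t n) hd hm
      have := tendsto_nhds_unique t₁ t₂
      rw [h0₁, h0₂] at this
      linarith
end

section
/- Let b ∈ C¹(ℝ) with m ≤ b'(y) for all y ∈ ℝ, let ε > 0, and let X_x and X_{x+ε} be continuous solutions on [0,T] of the equation driven by the same continuous path w with initial conditions x and x + ε respectively. Then X_{x+ε}(s) − X_x(s) ≥ ε e^{m s} > 0 for every s ∈ [0,T]; in particular the two solution paths never meet. -/
open MeasureTheory

/-- `X` is a (continuous) solution on `[0, T]` of the equation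
`X t = x₀ + ∫₀ᵗ b (X s) ds + σ * w t`. -/
def IsSolution (T σ x₀ : ℝ) (b w X : ℝ → ℝ) : Prop :=
  ContinuousOn X (Set.Icc 0 T) ∧
    ∀ t ∈ Set.Icc (0 : ℝ) T, X t = x₀ + (∫ s in (0 : ℝ)..t, b (X s)) + σ * w t

/-- If `b ∈ C¹(ℝ)` with `m ≤ b'`, then two solutions driven by the same path with initial
conditions `x` and `x + ε` satisfy `X_{x+ε}(s) - X_x(s) ≥ ε e^{m s} > 0` on `[0, T]`;
in particular the two solution paths never meet. -/
theorem diff_solutions_lower_bound (T σ x ε m : ℝ) (hT : 0 < T) (hε : 0 < ε)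
    (w b : ℝ → ℝ) (hw : ContinuousOn w (Set.Icc 0 T))
    (hb : ContDiff ℝ 1 b) (hm : ∀ y : ℝ, m ≤ deriv b y)
    (X Xε : ℝ → ℝ) (hX : IsSolution T σ x b w X) (hXε : IsSolution T σ (x + ε) b w Xε) :
    ∀ s ∈ Set.Icc (0 : ℝ) T,
      ε * Real.exp (m * s) ≤ Xε s - X s ∧ 0 < ε * Real.exp (m * s) := by
  have hbdiff : Differentiable ℝ b := hb.differentiable one_ne_zero
  -- `h y = b y - m y` is monotone
  have hmono : Monotone (fun y => b y - m * y) := by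
    apply monotone_of_deriv_nonneg
    · exact hbdiff.sub ((differentiable_id.const_mul m))
    · intro y
      have hd : HasDerivAt (fun y => b y - m * y) (deriv b y - m) y := by
        have h0 : HasDerivAt (fun y => b y - m * y) (deriv b y - m * 1) y :=
          ((hbdiff y).hasDerivAt).sub ((hasDerivAt_id y).const_mul m)
        simpa using h0
      rw [hd.deriv]
      linarith [hm y]
  obtain ⟨hXc, hXeq⟩ := hX
  obtain ⟨hXεc, hXεeq⟩ := hXε
  set g : ℝ → ℝ := fun t => b (Xε t) - b (X t) with hg
  have hgcont : ContinuousOn g (Set.Icc 0 T) :=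
    (hbdiff.continuous.comp_continuousOn hXεc).sub (hbdiff.continuous.comp_continuousOn hXc)
  have hint : ∀ t ∈ Set.Icc (0 : ℝ) T, IntervalIntegrable g volume 0 t := fun t ht => by
    apply (hgcont.mono _).intervalIntegrable
    rw [Set.uIcc_of_le ht.1]
    exact Set.Icc_subset_Icc le_rfl ht.2
  have hintX : ∀ t ∈ Set.Icc (0 : ℝ) T,
      IntervalIntegrable (fun s => b (X s)) volume 0 t := fun t ht => by
    apply ((hbdiff.continuous.comp_continuousOn hXc).mono _).intervalIntegrable
    rw [Set.uIcc_of_le ht.1]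
    exact Set.Icc_subset_Icc le_rfl ht.2
  have hintXε : ∀ t ∈ Set.Icc (0 : ℝ) T,
      IntervalIntegrable (fun s => b (Xε s)) volume 0 t := fun t ht => by
    apply ((hbdiff.continuous.comp_continuousOn hXεc).mono _).intervalIntegrable
    rw [Set.uIcc_of_le ht.1]
    exact Set.Icc_subset_Icc le_rfl ht.2
  set F : ℝ → ℝ := fun t => ε + ∫ s in (0:ℝ)..t, g s with hF
  have hZ : ∀ t ∈ Set.Icc (0 : ℝ) T, Xε t - X t = F t := by
    intro t ht
    have h1 := hXeq t ht
    have h2 := hXεeq t ht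
    have h3 : (∫ s in (0:ℝ)..t, g s)
        = (∫ s in (0:ℝ)..t, b (Xε s)) - ∫ s in (0:ℝ)..t, b (X s) :=
      intervalIntegral.integral_sub (hintXε t ht) (hintX t ht)
    simp only [hF, h3]
    rw [h1, h2]; ring
  have hFcont : ContinuousOn F (Set.Icc 0 T) :=
    ContinuousOn.congr (hXεc.sub hXc) (fun t ht => (hZ t ht).symm)
  have hFderiv : ∀ t ∈ Set.Ioo (0:ℝ) T, HasDerivAt F (g t) t := by
    intro t ht
    have htIcc : t ∈ Set.Icc (0:ℝ) T := Set.Ioo_subset_Icc_self ht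
    have hmeas : StronglyMeasurableAtFilter g (nhds t) volume := (hgcont.mono Set.Ioo_subset_Icc_self).stronglyMeasurableAtFilter
      isOpen_Ioo t ht
    have hcat : ContinuousAt g t :=
      hgcont.continuousAt (Icc_mem_nhds ht.1 ht.2)
    exact ((intervalIntegral.integral_hasDerivAt_right (hint t htIcc) hmeas hcat).const_add ε)
  set Y : ℝ → ℝ := fun t => F t * Real.exp (-m * t) with hY
  have hYderiv : ∀ t ∈ Set.Ioo (0:ℝ) T,
      HasDerivAt Y ((g t - m * F t) * Real.exp (-m * t)) t := by
    intro t ht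
    have he : HasDerivAt (fun t : ℝ => Real.exp (-m * t)) (-m * Real.exp (-m * t)) t := by
      simpa [mul_comm] using ((hasDerivAt_id t).const_mul (-m)).exp
    have : HasDerivAt (fun t => F t * Real.exp (-m * t))
        (g t * Real.exp (-m * t) + F t * (-m * Real.exp (-m * t))) t := (hFderiv t ht).mul he
    convert this using 1
    ring
  have hY0 : Y 0 = ε := by simp [hY, hF]
  -- key: if F > 0 on Ioo 0 c then Y is monotone on Icc 0 c
  have key : ∀ c ∈ Set.Icc (0:ℝ) T, (∀ u ∈ Set.Ioo (0:ℝ) c, 0 ≤ F u) →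
      MonotoneOn Y (Set.Icc 0 c) := by
    intro c hc hpos
    have hsub : Set.Icc (0:ℝ) c ⊆ Set.Icc 0 T := Set.Icc_subset_Icc le_rfl hc.2
    have hsub' : Set.Ioo (0:ℝ) c ⊆ Set.Ioo 0 T := Set.Ioo_subset_Ioo le_rfl hc.2
    apply monotoneOn_of_deriv_nonneg (convex_Icc 0 c)
    · exact ((hFcont.mono hsub).mul (Real.continuous_exp.comp
        (continuous_const.mul continuous_id)).continuousOn)
    · intro u hu
      rw [interior_Icc] at hu
      exact (hYderiv u (hsub' hu)).differentiableAt.differentiableWithinAt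
    · intro u hu
      rw [interior_Icc] at hu
      rw [(hYderiv u (hsub' hu)).deriv]
      have hFu : 0 ≤ F u := hpos u hu
      have huT : u ∈ Set.Icc (0:ℝ) T := Set.Icc_subset_Icc le_rfl hc.2 (Set.Ioo_subset_Icc_self hu)
      have hXle : X u ≤ Xε u := by
        have := hZ u huT
        linarith
      have hkey : b (X u) - m * X u ≤ b (Xε u) - m * Xε u := hmono hXle
      have : m * F u ≤ g u := by
        have hzu := hZ u huT
        simp only [hg]
        rw [← hzu]
        linarith [hkey]
      have := sub_nonneg.mpr this
      positivity
  -- F is positive on all of Icc 0 T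
  have hFpos : ∀ t ∈ Set.Icc (0:ℝ) T, 0 < F t := by
    by_contra hcon
    push_neg at hcon
    obtain ⟨t₁, ht₁, ht₁le⟩ := hcon
    set A : Set ℝ := {t ∈ Set.Icc (0:ℝ) T | F t ≤ 0} with hA
    have hAne : A.Nonempty := ⟨t₁, ht₁, ht₁le⟩
    have hAbdd : BddBelow A := ⟨0, fun t ht => ht.1.1⟩
    have hAclosed : IsClosed A := by
      have : A = Set.Icc (0:ℝ) T ∩ F ⁻¹' Set.Iic 0 := rfl
      rw [this]
      exact ContinuousOn.preimage_isClosed_of_isClosed hFcont isClosed_Icc isClosed_Iic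
    set t₀ := sInf A with ht₀
    have ht₀A : t₀ ∈ A := hAclosed.csInf_mem hAne hAbdd
    have ht₀Icc : t₀ ∈ Set.Icc (0:ℝ) T := ht₀A.1
    have hF0 : F 0 = ε := by simp [hF]
    have ht₀ne : t₀ ≠ 0 := by
      intro h
      have := ht₀A.2
      rw [h, hF0] at this
      linarith
    have ht₀pos : 0 < t₀ := lt_of_le_of_ne ht₀Icc.1 (Ne.symm ht₀ne)
    have hFpos' : ∀ u ∈ Set.Ioo (0:ℝ) t₀, 0 ≤ F u := by
      intro u hu
      by_contra hneg
      push_neg at hneg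
      have huA : u ∈ A := ⟨⟨le_of_lt hu.1, le_trans (le_of_lt hu.2) ht₀Icc.2⟩, le_of_lt hneg⟩
      exact absurd (csInf_le hAbdd huA) (not_le.mpr hu.2)
    have hmonoY := key t₀ ht₀Icc hFpos'
    have : Y 0 ≤ Y t₀ := hmonoY ⟨le_rfl, le_of_lt ht₀pos⟩ ⟨le_of_lt ht₀pos, le_rfl⟩
      (le_of_lt ht₀pos)
    rw [hY0] at this
    have hYt₀ : Y t₀ ≤ 0 := by
      have he : 0 < Real.exp (-m * t₀) := Real.exp_pos _
      have := ht₀A.2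
      simp only [hY]
      exact mul_nonpos_of_nonpos_of_nonneg this he.le
    linarith
  intro s hs
  have hmonoY := key T ⟨le_of_lt hT, le_rfl⟩
    (fun u hu => (hFpos u (Set.Ioo_subset_Icc_self hu)).le)
  have hYs : ε ≤ Y s := by
    have := hmonoY ⟨le_rfl, le_of_lt hT⟩ hs hs.1
    rwa [hY0] at this
  have hZeq := hZ s hs
  have hexp : 0 < Real.exp (-m * s) := Real.exp_pos _
  constructor
  · rw [hZeq]
    have : ε * Real.exp (m * s) ≤ F s * Real.exp (-m * s) * Real.exp (m * s) := by
      apply mul_le_mul_of_nonneg_right hYs (Real.exp_pos _).le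
    calc ε * Real.exp (m * s) ≤ F s * Real.exp (-m * s) * Real.exp (m * s) := this
      _ = F s := by rw [mul_assoc, ← Real.exp_add]; ring_nf; simp
  · positivity
end

section
/- Let b ∈ C²(ℝ) with m ≤ b'(y) ≤ M for all y ∈ ℝ and with bounded second derivative, let ε > 0, let t ∈ (0,T], and let X_x and X_{x+ε} be continuous solutions on [0,T] of the equation driven by the same continuous path w with initial conditions x and x + ε. Then for all 0 ≤ v < u ≤ t, | exp( ∫_v^u b'(X_x(r)) dr ) − (X_{x+ε}(u) − X_x(u))/(X_{x+ε}(v) − X_x(v)) | ≤ (‖b''‖_∞ / 2) · ε · (1 ∨ e^{M t}) · 𝔪_M(u,v), where 𝔪_M(u,v) := −(1/M) e^{M v} if M < 0, 𝔪_M(u,v) := u − v if M = 0, and 𝔪_M(u,v) := (1/M) e^{M u} if M > 0. -/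
open MeasureTheory Set

lemma aux_mvt_upper {b : ℝ → ℝ} (hb : Differentiable ℝ b) {M : ℝ}
    (hM : ∀ y, deriv b y ≤ M) {a c : ℝ} (h : a ≤ c) : b c - b a ≤ M * (c - a) := by
  have hg : Monotone (fun y => M * y - b y) := by
    have hd : ∀ y : ℝ, HasDerivAt (fun y => M * y - b y) (M - deriv b y) y := fun y => by
      simpa using ((hasDerivAt_id y).const_mul M).fun_sub (hb y).hasDerivAt
    exact monotone_of_hasDerivAt_nonneg hd (fun y => by simp [hM y])
  have := hg h
  simp only at this; linarith

lemma aux_mvt_lower {b : ℝ → ℝ} (hb : Differentiable ℝ b) {m : ℝ}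
    (hm : ∀ y, m ≤ deriv b y) {a c : ℝ} (h : a ≤ c) : m * (c - a) ≤ b c - b a := by
  have hg : Monotone (fun y => b y - m * y) := by
    have hd : ∀ y : ℝ, HasDerivAt (fun y => b y - m * y) (deriv b y - m) y := fun y => by
      simpa using (hb y).hasDerivAt.fun_sub ((hasDerivAt_id y).const_mul m)
    exact monotone_of_hasDerivAt_nonneg hd (fun y => by simp [hm y])
  have := hg h
  simp only at this; linarith

lemma aux_lip {b : ℝ → ℝ} (hb : Differentiable ℝ b) {m M : ℝ}
    (hm : ∀ y, m ≤ deriv b y) (hM : ∀ y, deriv b y ≤ M) (a c : ℝ) :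
    |b c - b a| ≤ max (-m) M * |c - a| := by
  have h1 : -m ≤ max (-m) M := le_max_left _ _
  have h2 : M ≤ max (-m) M := le_max_right _ _
  rcases le_total a c with h | h
  · have hu := aux_mvt_upper hb hM h
    have hl := aux_mvt_lower hb hm h
    rw [abs_le, abs_of_nonneg (by linarith : (0:ℝ) ≤ c - a)]
    constructor <;> nlinarith
  · have hu := aux_mvt_upper hb hM h
    have hl := aux_mvt_lower hb hm h
    rw [abs_le, abs_of_nonpos (by linarith : c - a ≤ 0)]
    constructor <;> nlinarith

lemma aux_taylor {b : ℝ → ℝ} (hb : ContDiff ℝ 2 b) {K : ℝ}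
    (hK : ∀ y, |deriv (deriv b) y| ≤ K) {a c : ℝ} (h : a ≤ c) :
    |b c - b a - deriv b a * (c - a)| ≤ K / 2 * (c - a) ^ 2 := by
  have hb1 : Differentiable ℝ b := hb.differentiable two_ne_zero
  have hb2 : Differentiable ℝ (deriv b) := by
    have h2 : ContDiff ℝ (1 + 1 : WithTop ℕ∞) b := by norm_num; exact hb
    exact (contDiff_succ_iff_deriv.mp h2).2.2.differentiable one_ne_zero
  have hlipu : ∀ y, a ≤ y → deriv b y - deriv b a ≤ K * (y - a) := fun y hy =>
    aux_mvt_upper hb2 (fun z => (abs_le.mp (hK z)).2) hy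
  have hlipl : ∀ y, a ≤ y → -K * (y - a) ≤ deriv b y - deriv b a := fun y hy =>
    aux_mvt_lower hb2 (fun z => (abs_le.mp (hK z)).1) hy
  have hsq : ∀ y : ℝ, HasDerivAt (fun y : ℝ => K / 2 * (y - a) ^ 2) (K * (y - a)) y := fun y => by
    have h1 : HasDerivAt (fun y : ℝ => (y - a) ^ 2) ((2 : ℕ) * (y - a) ^ 1 * 1) y :=
      ((hasDerivAt_id y).sub_const a).pow 2
    have := h1.const_mul (K / 2)
    refine this.congr_deriv ?_
    ring
  have hlin : ∀ y : ℝ, HasDerivAt (fun y => b y - deriv b a * y) (deriv b y - deriv b a) y :=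
    fun y => by simpa using (hb1 y).hasDerivAt.fun_sub ((hasDerivAt_id y).const_mul (deriv b a))
  have hcont : ∀ s : ℝ, Continuous fun y : ℝ => K / 2 * (y - a) ^ 2 - s * (b y - deriv b a * y) :=
    fun s => (continuous_const.mul ((continuous_id.sub continuous_const).pow 2)).sub
      (continuous_const.mul (hb1.continuous.sub (continuous_const.mul continuous_id)))
  have key : ∀ s : ℝ, s = 1 ∨ s = -1 →
      MonotoneOn (fun y => K / 2 * (y - a) ^ 2 - s * (b y - deriv b a * y)) (Ici a) := by
    intro s hs
    apply monotoneOn_of_hasDerivWithinAt_nonneg (convex_Ici a) (hcont s).continuousOn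
      (f' := fun y => K * (y - a) - s * (deriv b y - deriv b a))
    · intro y _
      exact ((hsq y).sub ((hlin y).const_mul s)).hasDerivWithinAt
    · intro y hy
      rw [interior_Ici] at hy
      have hay : a ≤ y := le_of_lt hy
      rcases hs with h1 | h1 <;> subst h1
      · have := hlipu y hay; linarith
      · have := hlipl y hay; linarith
  have ha : a ∈ Ici a := self_mem_Ici
  have hc : c ∈ Ici a := h
  have k1 := key 1 (Or.inl rfl) ha hc h
  have k2 := key (-1) (Or.inr rfl) ha hc h
  simp only at k1 k2
  rw [abs_le]
  constructor <;> nlinarith [k1, k2]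

lemma aux_integral_exp_mul {M : ℝ} (hM : M ≠ 0) (v u : ℝ) :
    (∫ r in v..u, Real.exp (M * r)) = Real.exp (M * u) / M - Real.exp (M * v) / M := by
  have hder : ∀ r : ℝ, HasDerivAt (fun r => Real.exp (M * r) / M) (Real.exp (M * r)) r := by
    intro r
    have h1 : HasDerivAt (fun r : ℝ => M * r) M r := by
      simpa using (hasDerivAt_id r).const_mul M
    have h2 := h1.exp.div_const M
    have h3 : Real.exp (M * r) * M / M = Real.exp (M * r) := by
      field_simp
    rw [h3] at h2
    exact h2
  apply intervalIntegral.integral_eq_sub_of_hasDerivAt (fun r _ => hder r)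
  exact ((Real.continuous_exp.comp (continuous_const.mul continuous_id)).continuousOn).intervalIntegrable

/-- The kernel `𝔪_M(u, v)`. -/
noncomputable def mMfun (M u v : ℝ) : ℝ :=
  if M < 0 then -(1 / M) * Real.exp (M * v)
  else if M = 0 then u - v
  else (1 / M) * Real.exp (M * u)

set_option maxHeartbeats 1000000 in
/-- For `b ∈ C²(ℝ)` with `m ≤ b' ≤ M` and `|b''| ≤ K`, the quotient of the increments of two
solutions with initial conditions `x` and `x + ε` approximates `exp(∫ᵥᵘ b'(X_x(r)) dr)` with
error at most `(K / 2) ε (1 ∨ e^{M t}) 𝔪_M(u, v)`. -/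
theorem quotient_approximates_exp (T σ x ε t m M K : ℝ) (hT : 0 < T) (hε : 0 < ε)
    (ht : t ∈ Set.Ioc (0 : ℝ) T)
    (w b : ℝ → ℝ) (hw : ContinuousOn w (Set.Icc 0 T))
    (hb : ContDiff ℝ 2 b)
    (hm : ∀ y : ℝ, m ≤ deriv b y) (hM : ∀ y : ℝ, deriv b y ≤ M)
    (hK : ∀ y : ℝ, |deriv (deriv b) y| ≤ K)
    (X Xε : ℝ → ℝ) (hX : IsSolution T σ x b w X) (hXε : IsSolution T σ (x + ε) b w Xε) :
    ∀ v u : ℝ, 0 ≤ v → v < u → u ≤ t →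
      |Real.exp (∫ r in v..u, deriv b (X r)) - (Xε u - X u) / (Xε v - X v)| ≤
        K / 2 * ε * max 1 (Real.exp (M * t)) * mMfun M u v := by
  obtain ⟨hXc, hXeq⟩ := hX
  obtain ⟨hXεc, hXεeq⟩ := hXε
  obtain ⟨ht0, htT⟩ := ht
  have hb1 : Differentiable ℝ b := hb.differentiable two_ne_zero
  have hbc : Continuous b := hb1.continuous
  have hb'c : Continuous (deriv b) := hb.continuous_deriv one_le_two
  have hK0 : 0 ≤ K := le_trans (abs_nonneg _) (hK 0)
  set Z : ℝ → ℝ := fun r => Xε r - X r with hZdef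
  set f : ℝ → ℝ := fun s => b (Xε s) - b (X s) with hfdef
  have hZc : ContinuousOn Z (Icc 0 T) := hXεc.sub hXc
  have hfc : ContinuousOn f (Icc 0 T) :=
    (hbc.comp_continuousOn hXεc).sub (hbc.comp_continuousOn hXc)
  have hsubI : ∀ r ∈ Icc (0:ℝ) T, uIcc (0:ℝ) r ⊆ Icc (0:ℝ) T := by
    intro r hr
    rw [uIcc_of_le hr.1]
    exact Icc_subset_Icc le_rfl hr.2
  -- integral formula for Z
  have hZeq : ∀ r ∈ Icc (0:ℝ) T, Z r = ε + ∫ s in (0:ℝ)..r, f s := by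
    intro r hr
    have hi1 : IntervalIntegrable (fun s => b (Xε s)) volume 0 r :=
      ((hbc.comp_continuousOn hXεc).mono (hsubI r hr)).intervalIntegrable
    have hi2 : IntervalIntegrable (fun s => b (X s)) volume 0 r :=
      ((hbc.comp_continuousOn hXc).mono (hsubI r hr)).intervalIntegrable
    have h1 := hXeq r hr
    have h2 := hXεeq r hr
    simp only [hZdef, hfdef]
    rw [intervalIntegral.integral_sub hi1 hi2, h1, h2]
    ring
  have hZ0 : Z 0 = ε := by
    rw [hZeq 0 (left_mem_Icc.mpr hT.le), intervalIntegral.integral_same]; ring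
  -- derivative of Z at interior points
  have hZder : ∀ r ∈ Ioo (0:ℝ) T, HasDerivAt Z (f r) r := by
    intro r hr
    have hnhds : Icc (0:ℝ) T ∈ nhds r :=
      Filter.mem_of_superset (isOpen_Ioo.mem_nhds hr) Ioo_subset_Icc_self
    have hcf : ContinuousAt f r := (hfc.mono Ioo_subset_Icc_self).continuousAt
      (isOpen_Ioo.mem_nhds hr)
    have hmeas : StronglyMeasurableAtFilter f (nhds r) volume :=
      ContinuousOn.stronglyMeasurableAtFilter isOpen_Ioo (hfc.mono Ioo_subset_Icc_self) r hr
    have hG : HasDerivAt (fun ρ => ε + ∫ s in (0:ℝ)..ρ, f s) (f r) r :=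
      (intervalIntegral.integral_hasDerivAt_right
        ((hfc.mono (hsubI r (Ioo_subset_Icc_self hr))).intervalIntegrable) hmeas hcf).const_add ε
    apply hG.congr_of_eventuallyEq
    filter_upwards [hnhds] with ρ hρ using hZeq ρ hρ
  -- Lipschitz constant
  set L : ℝ := max (-m) M with hLdef
  have hmM : m ≤ M := le_trans (hm 0) (hM 0)
  have hL0 : 0 ≤ L := by
    rcases le_total 0 M with h | h
    · exact le_max_of_le_right h
    · exact le_max_of_le_left (by linarith)
  have hflip : ∀ r, |f r| ≤ L * |Z r| := fun r => aux_lip hb1 hm hM (X r) (Xε r)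
  -- positivity of Z on [0, T]
  have hZne : ∀ r ∈ Icc (0:ℝ) T, Z r ≠ 0 := by
    have hmono : MonotoneOn (fun r => (Z r) ^ 2 * Real.exp (2 * L * r)) (Icc 0 T) := by
      apply monotoneOn_of_hasDerivWithinAt_nonneg (convex_Icc 0 T)
        ((hZc.pow 2).mul ((Real.continuous_exp.comp (continuous_const.mul continuous_id)).continuousOn))
        (f' := fun r => (2 * Z r * f r) * Real.exp (2 * L * r)
          + (Z r) ^ 2 * (2 * L * Real.exp (2 * L * r)))
      · intro r hr
        rw [interior_Icc] at hr
        have he : HasDerivAt (fun r : ℝ => Real.exp (2 * L * r)) (2 * L * Real.exp (2 * L * r)) r := by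
          have := ((hasDerivAt_id r).const_mul (2 * L)).exp
          refine this.congr_deriv ?_
          simp only [id_eq]
          ring
        have hp : HasDerivAt (fun r => (Z r) ^ 2) (2 * Z r * f r) r := by
          have := (hZder r hr).pow 2
          refine this.congr_deriv ?_; ring
        exact (hp.mul he).hasDerivWithinAt
      · intro r hr
        rw [interior_Icc] at hr
        have h1 := hflip r
        have h2 : Z r * f r ≥ -(L * (Z r) ^ 2) := by
          have : |Z r * f r| ≤ L * (Z r) ^ 2 := by
            rw [abs_mul]
            calc |Z r| * |f r| ≤ |Z r| * (L * |Z r|) :=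
                  mul_le_mul_of_nonneg_left h1 (abs_nonneg _)
            _ = L * (Z r) ^ 2 := by rw [← sq_abs]; ring
          linarith [neg_abs_le (Z r * f r)]
        have h3 : (0:ℝ) < Real.exp (2 * L * r) := Real.exp_pos _
        nlinarith
    intro r hr h0
    have h1 := hmono (left_mem_Icc.mpr hT.le) hr hr.1
    simp only [h0, hZ0] at h1
    have h2 : (0:ℝ) < ε ^ 2 * Real.exp (2 * L * 0) := by positivity
    have h3 : (0:ℝ) ^ 2 * Real.exp (2 * L * r) = 0 := by ring
    linarith
  have hZpos : ∀ r ∈ Icc (0:ℝ) T, 0 < Z r := by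
    intro r hr
    by_contra hcon
    push_neg at hcon
    have hIVT := intermediate_value_Icc' hr.1 (hZc.mono (Icc_subset_Icc le_rfl hr.2))
    have h0mem : (0:ℝ) ∈ Icc (Z r) (Z 0) := by
      constructor
      · exact hcon
      · rw [hZ0]; exact hε.le
    obtain ⟨c, hc, hZc0⟩ := hIVT h0mem
    exact hZne c ⟨hc.1, hc.2.trans hr.2⟩ hZc0
  -- f r ≤ M * Z r on [0,T]
  have hfM : ∀ r ∈ Icc (0:ℝ) T, f r ≤ M * Z r := by
    intro r hr
    have hord : X r ≤ Xε r := by have := hZpos r hr; simp only [hZdef] at this; linarith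
    have := aux_mvt_upper hb1 hM hord
    simp only [hfdef, hZdef]
    linarith
  -- antitone of Z r * exp (-(M*r))
  have hanti : AntitoneOn (fun r => Z r * Real.exp (-(M * r))) (Icc 0 T) := by
    apply antitoneOn_of_hasDerivWithinAt_nonpos (convex_Icc 0 T)
      (hZc.mul ((Real.continuous_exp.comp (continuous_const.mul continuous_id).neg).continuousOn))
      (f' := fun r => f r * Real.exp (-(M * r)) + Z r * (-M * Real.exp (-(M * r))))
    · intro r hr
      rw [interior_Icc] at hr
      have he : HasDerivAt (fun r : ℝ => Real.exp (-(M * r))) (-M * Real.exp (-(M * r))) r := by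
        have := (((hasDerivAt_id r).const_mul M).fun_neg).exp
        refine this.congr_deriv ?_
        simp only [id_eq]
        ring
      exact ((hZder r hr).mul he).hasDerivWithinAt
    · intro r hr
      rw [interior_Icc] at hr
      have h1 := hfM r (Ioo_subset_Icc_self hr)
      have h3 : (0:ℝ) < Real.exp (-(M * r)) := Real.exp_pos _
      nlinarith
  have hZgrow : ∀ a c : ℝ, a ∈ Icc (0:ℝ) T → c ∈ Icc (0:ℝ) T → a ≤ c →
      Z c ≤ Z a * Real.exp (M * (c - a)) := by
    intro a c ha hc hac
    have := hanti ha hc hac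
    simp only at this
    have hea : (0:ℝ) < Real.exp (-(M * a)) := Real.exp_pos _
    have hec : (0:ℝ) < Real.exp (-(M * c)) := Real.exp_pos _
    have key : Z a * Real.exp (M * (c - a)) = Z a * Real.exp (-(M * a)) / Real.exp (-(M * c)) := by
      rw [eq_div_iff hec.ne', mul_assoc, ← Real.exp_add]
      ring_nf
    rw [key, le_div_iff₀ hec]
    linarith
  -- the primitive A
  set A : ℝ → ℝ := fun r => ∫ s in (0:ℝ)..r, deriv b (X s) with hAdef
  have hb'Xc : ContinuousOn (fun s => deriv b (X s)) (Icc 0 T) := hb'c.comp_continuousOn hXc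
  have hAder : ∀ r ∈ Ioo (0:ℝ) T, HasDerivAt A (deriv b (X r)) r := by
    intro r hr
    have hcf : ContinuousAt (fun s => deriv b (X s)) r :=
      (hb'Xc.mono Ioo_subset_Icc_self).continuousAt (isOpen_Ioo.mem_nhds hr)
    have hmeas : StronglyMeasurableAtFilter (fun s => deriv b (X s)) (nhds r) volume :=
      ContinuousOn.stronglyMeasurableAtFilter isOpen_Ioo (hb'Xc.mono Ioo_subset_Icc_self) r hr
    exact intervalIntegral.integral_hasDerivAt_right
      ((hb'Xc.mono (hsubI r (Ioo_subset_Icc_self hr))).intervalIntegrable) hmeas hcf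
  have hAc : ContinuousOn A (Icc 0 T) := by
    have : IntegrableOn (fun s => deriv b (X s)) (uIcc (0:ℝ) T) volume := by
      rw [uIcc_of_le hT.le]
      exact hb'Xc.integrableOn_Icc
    simpa [uIcc_of_le hT.le] using intervalIntegral.continuousOn_primitive_interval this
  have hAdiff : ∀ a c : ℝ, a ∈ Icc (0:ℝ) T → c ∈ Icc (0:ℝ) T → a ≤ c →
      A c - A a = ∫ s in a..c, deriv b (X s) := by
    intro a c ha hc hac
    have hi1 : IntervalIntegrable (fun s => deriv b (X s)) volume 0 a :=
      ((hb'Xc.mono (hsubI a ha)).intervalIntegrable)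
    have hi2 : IntervalIntegrable (fun s => deriv b (X s)) volume a c := by
      apply (hb'Xc.mono _).intervalIntegrable
      rw [uIcc_of_le hac]
      exact Icc_subset_Icc ha.1 hc.2
    have := intervalIntegral.integral_add_adjacent_intervals hi1 hi2
    simp only [hAdef]
    linarith
  have hAbound : ∀ a c : ℝ, a ∈ Icc (0:ℝ) T → c ∈ Icc (0:ℝ) T → a ≤ c →
      A c - A a ≤ M * (c - a) := by
    intro a c ha hc hac
    rw [hAdiff a c ha hc hac]
    have hi2 : IntervalIntegrable (fun s => deriv b (X s)) volume a c := by
      apply (hb'Xc.mono _).intervalIntegrable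
      rw [uIcc_of_le hac]
      exact Icc_subset_Icc ha.1 hc.2
    calc (∫ s in a..c, deriv b (X s)) ≤ ∫ _ in a..c, M :=
          intervalIntegral.integral_mono_on hac hi2 intervalIntegrable_const
            (fun s _ => hM (X s))
    _ = M * (c - a) := by rw [intervalIntegral.integral_const, smul_eq_mul]; ring
  -- phi and psi
  set φ : ℝ → ℝ := fun r => Real.exp (-A r) * Z r with hφdef
  set ψ : ℝ → ℝ := fun r => Real.exp (-A r) * (f r - deriv b (X r) * Z r) with hψdef
  have hφder : ∀ r ∈ Ioo (0:ℝ) T, HasDerivAt φ (ψ r) r := by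
    intro r hr
    have he : HasDerivAt (fun r => Real.exp (-A r)) (-deriv b (X r) * Real.exp (-A r)) r := by
      have := ((hAder r hr).fun_neg).exp
      refine this.congr_deriv ?_
      ring
    have := he.mul (hZder r hr)
    simp only [hψdef]
    refine this.congr_deriv ?_
    ring
  have hφc : ContinuousOn φ (Icc 0 T) :=
    (Real.continuous_exp.comp_continuousOn hAc.neg).mul hZc
  have hψc : ContinuousOn ψ (Icc 0 T) :=
    (Real.continuous_exp.comp_continuousOn hAc.neg).mul (hfc.sub (hb'Xc.mul hZc))
  -- main part
  intro v u hv hvu hut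
  have huT : u ≤ T := hut.trans htT
  have hvmem : v ∈ Icc (0:ℝ) T := ⟨hv, (hvu.le.trans huT)⟩
  have humem : u ∈ Icc (0:ℝ) T := ⟨hv.trans hvu.le, huT⟩
  have hvu' : v ≤ u := hvu.le
  have hIccsub : Icc v u ⊆ Icc (0:ℝ) T := Icc_subset_Icc hv huT
  have hZv : 0 < Z v := hZpos v hvmem
  -- FTC 2
  have hψint : IntervalIntegrable ψ volume v u := by
    apply (hψc.mono _).intervalIntegrable
    rw [uIcc_of_le hvu']; exact hIccsub
  have hFTC : (∫ r in v..u, ψ r) = φ u - φ v := by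
    apply intervalIntegral.integral_eq_sub_of_hasDeriv_right_of_le hvu'
      (hφc.mono hIccsub) _ hψint
    intro r hr
    exact (hφder r ⟨lt_of_le_of_lt hv hr.1, lt_of_lt_of_le hr.2 huT⟩).hasDerivWithinAt
  -- identity
  have hAsplit : (∫ r in v..u, deriv b (X r)) = A u - A v :=
    (hAdiff v u hvmem humem hvu').symm
  have hid : Real.exp (∫ r in v..u, deriv b (X r)) - Z u / Z v
      = Real.exp (A u) * (φ v - φ u) / Z v := by
    rw [hAsplit, Real.exp_sub]
    simp only [hφdef, Real.exp_neg]
    field_simp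
  have hgoalZ : (Xε u - X u) / (Xε v - X v) = Z u / Z v := rfl
  rw [hgoalZ, hid]
  -- abs manipulation
  have hφvu : |φ v - φ u| = |∫ r in v..u, ψ r| := by
    rw [abs_sub_comm, ← hFTC]
  have habs : |Real.exp (A u) * (φ v - φ u) / Z v|
      = Real.exp (A u) / Z v * |∫ r in v..u, ψ r| := by
    rw [abs_div, abs_mul, abs_of_pos hZv, abs_of_pos (Real.exp_pos _), hφvu]
    ring
  rw [habs]
  -- bound the integral
  set c : ℝ := Real.exp (A u) / Z v with hcdef
  have hc0 : 0 ≤ c := div_nonneg (Real.exp_pos _).le hZv.le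
  set D : ℝ → ℝ := fun r => K / 2 * ε * Real.exp (M * (u - v)) * Real.exp (M * r) with hDdef
  have hpt : ∀ r ∈ Icc v u, c * |ψ r| ≤ D r := by
    intro r hr
    have hrT : r ∈ Icc (0:ℝ) T := hIccsub hr
    have hZr : 0 < Z r := hZpos r hrT
    have hord : X r ≤ Xε r := by simp only [hZdef] at hZr; linarith
    have htay : |f r - deriv b (X r) * Z r| ≤ K / 2 * (Z r) ^ 2 := by
      simp only [hfdef, hZdef]
      exact aux_taylor hb hK hord
    have hψb : |ψ r| ≤ Real.exp (-A r) * (K / 2 * (Z r) ^ 2) := by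
      simp only [hψdef, abs_mul, abs_of_pos (Real.exp_pos (-A r))]
      exact mul_le_mul_of_nonneg_left htay (Real.exp_pos _).le
    have t1 : Real.exp (A u - A r) ≤ Real.exp (M * (u - r)) :=
      Real.exp_le_exp.mpr (by simpa [mul_comm] using hAbound r u hrT humem hr.2)
    have t2 : Z r ≤ ε * Real.exp (M * r) := by
      have := hZgrow 0 r (left_mem_Icc.mpr hT.le) hrT hrT.1
      simpa [hZ0] using this
    have t3 : Z r ≤ Z v * Real.exp (M * (r - v)) := hZgrow v r hvmem hrT hr.1
    have key : c * (Real.exp (-A r) * (K / 2 * (Z r) ^ 2))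
        = K / 2 * (Real.exp (A u - A r) * (Z r * (Z r / Z v))) := by
      rw [hcdef, Real.exp_sub, Real.exp_neg]
      field_simp
    calc c * |ψ r| ≤ c * (Real.exp (-A r) * (K / 2 * (Z r) ^ 2)) :=
          mul_le_mul_of_nonneg_left hψb hc0
    _ = K / 2 * (Real.exp (A u - A r) * (Z r * (Z r / Z v))) := key
    _ ≤ K / 2 * (Real.exp (M * (u - r)) * ((ε * Real.exp (M * r)) * Real.exp (M * (r - v)))) := by
        have hq : Z r / Z v ≤ Real.exp (M * (r - v)) := by
          rw [div_le_iff₀ hZv]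
          nlinarith [t3]
        have hq0 : 0 ≤ Z r / Z v := div_nonneg hZr.le hZv.le
        have h2 : Z r * (Z r / Z v) ≤ ε * Real.exp (M * r) * Real.exp (M * (r - v)) :=
          mul_le_mul t2 hq hq0 (by positivity)
        have h1 : Real.exp (A u - A r) * (Z r * (Z r / Z v))
            ≤ Real.exp (M * (u - r)) * (ε * Real.exp (M * r) * Real.exp (M * (r - v))) :=
          mul_le_mul t1 h2 (mul_nonneg hZr.le hq0) (Real.exp_pos _).le
        have hK2 : (0:ℝ) ≤ K / 2 := by linarith
        exact mul_le_mul_of_nonneg_left h1 hK2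
    _ = D r := by
        have hexp : Real.exp (M * (u - r)) * Real.exp (M * r) * Real.exp (M * (r - v))
            = Real.exp (M * (u - v)) * Real.exp (M * r) := by
          rw [← Real.exp_add, ← Real.exp_add, ← Real.exp_add]
          congr 1
          ring
        simp only [hDdef]
        linear_combination (K / 2 * ε) * hexp
  have hcψint : IntervalIntegrable (fun r => c * |ψ r|) volume v u := by
    apply ContinuousOn.intervalIntegrable
    apply ContinuousOn.mul continuousOn_const
    apply ContinuousOn.abs
    apply hψc.mono
    rw [uIcc_of_le hvu']; exact hIccsub
  have hDint : IntervalIntegrable D volume v u := by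
    apply ContinuousOn.intervalIntegrable
    exact (continuousOn_const.mul
      ((Real.continuous_exp.comp (continuous_const.mul continuous_id)).continuousOn))
  have step2 : c * |∫ r in v..u, ψ r| ≤ ∫ r in v..u, c * |ψ r| := by
    rw [intervalIntegral.integral_const_mul]
    exact mul_le_mul_of_nonneg_left (intervalIntegral.abs_integral_le_integral_abs hvu') hc0
  have step3 : (∫ r in v..u, c * |ψ r|) ≤ ∫ r in v..u, D r :=
    intervalIntegral.integral_mono_on hvu' hcψint hDint hpt
  have step4 : (∫ r in v..u, D r)
      = K / 2 * ε * Real.exp (M * (u - v)) * ∫ r in v..u, Real.exp (M * r) := by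
    simp only [hDdef]
    rw [← intervalIntegral.integral_const_mul]
  -- final elementary bound
  have hfinal : Real.exp (M * (u - v)) * (∫ r in v..u, Real.exp (M * r))
      ≤ max 1 (Real.exp (M * t)) * mMfun M u v := by
    rcases lt_trichotomy M 0 with hMlt | hMeq | hMgt
    · have hint := aux_integral_exp_mul hMlt.ne v u
      rw [hint]
      unfold mMfun
      rw [if_pos hMlt]
      have e1 : Real.exp (M * (u - v)) ≤ 1 := Real.exp_le_one_iff.mpr (by nlinarith)
      have e2 : Real.exp (M * u) / M - Real.exp (M * v) / M ≤ -(1 / M) * Real.exp (M * v) := by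
        have : 0 < Real.exp (M * u) := Real.exp_pos _
        have hMn : M < 0 := hMlt
        rw [div_sub_div_same, div_le_iff_of_neg hMn]
        have hh : -(1 / M) * Real.exp (M * v) * M = -Real.exp (M * v) := by
          field_simp
          rw [div_self hMlt.ne]
        rw [hh]
        linarith [Real.exp_pos (M * u)]
      have e3 : 0 ≤ Real.exp (M * u) / M - Real.exp (M * v) / M := by
        have hle : Real.exp (M * u) ≤ Real.exp (M * v) :=
          Real.exp_le_exp.mpr (by nlinarith)
        rw [div_sub_div_same]
        exact div_nonneg_iff.mpr (Or.inr ⟨by linarith, hMlt.le⟩)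
      have e4 : (1:ℝ) ≤ max 1 (Real.exp (M * t)) := le_max_left _ _
      calc Real.exp (M * (u - v)) * (Real.exp (M * u) / M - Real.exp (M * v) / M)
          ≤ 1 * (Real.exp (M * u) / M - Real.exp (M * v) / M) :=
            mul_le_mul_of_nonneg_right e1 e3
      _ ≤ max 1 (Real.exp (M * t)) * (-(1 / M) * Real.exp (M * v)) := by
          apply mul_le_mul e4 e2 e3 (by linarith)
    · subst hMeq
      have h1 : mMfun 0 u v = u - v := by unfold mMfun; norm_num
      have h2 : (∫ r in v..u, Real.exp (0 * r)) = u - v := by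
        simp [intervalIntegral.integral_const]
      rw [h1, h2]
      simp only [zero_mul, Real.exp_zero, one_mul]
      rw [max_self]
      linarith
    · have hint := aux_integral_exp_mul hMgt.ne' v u
      rw [hint]
      unfold mMfun
      rw [if_neg (not_lt.mpr hMgt.le), if_neg hMgt.ne']
      have e1 : Real.exp (M * (u - v)) ≤ Real.exp (M * t) :=
        Real.exp_le_exp.mpr (by nlinarith)
      have e1' : Real.exp (M * (u - v)) ≤ max 1 (Real.exp (M * t)) :=
        e1.trans (le_max_right _ _)
      have e2 : Real.exp (M * u) / M - Real.exp (M * v) / M ≤ 1 / M * Real.exp (M * u) := by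
        rw [div_sub_div_same, div_le_iff₀ hMgt]
        have hh : 1 / M * Real.exp (M * u) * M = Real.exp (M * u) := by
          field_simp
        rw [hh]
        linarith [Real.exp_pos (M * v)]
      have e3 : 0 ≤ Real.exp (M * u) / M - Real.exp (M * v) / M := by
        have hle : Real.exp (M * v) ≤ Real.exp (M * u) :=
          Real.exp_le_exp.mpr (by nlinarith)
        rw [div_sub_div_same]
        exact div_nonneg (by linarith) hMgt.le
      calc Real.exp (M * (u - v)) * (Real.exp (M * u) / M - Real.exp (M * v) / M)
          ≤ max 1 (Real.exp (M * t)) * (1 / M * Real.exp (M * u)) := by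
            apply mul_le_mul e1' e2 e3 (le_trans zero_le_one (le_max_left _ _))
      _ = max 1 (Real.exp (M * t)) * (1 / M * Real.exp (M * u)) := rfl
  -- combine
  calc c * |∫ r in v..u, ψ r| ≤ ∫ r in v..u, c * |ψ r| := step2
  _ ≤ ∫ r in v..u, D r := step3
  _ = K / 2 * ε * Real.exp (M * (u - v)) * ∫ r in v..u, Real.exp (M * r) := step4
  _ = K / 2 * ε * (Real.exp (M * (u - v)) * ∫ r in v..u, Real.exp (M * r)) := by ring
  _ ≤ K / 2 * ε * (max 1 (Real.exp (M * t)) * mMfun M u v) := by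
      apply mul_le_mul_of_nonneg_left hfinal (by positivity)
  _ = K / 2 * ε * max 1 (Real.exp (M * t)) * mMfun M u v := by ring
end

section
/- Let H ∈ (1/2, 1), M ∈ ℝ, t > 0 and set α_H := H(2H − 1). Then α_H (1 ∨ e^{M t}) ∫₀ᵗ ∫₀ᵘ 𝔪_M(u,v) (u − v)^{2H−2} dv du ≤ t^{2H−1} 𝔪_{H,M}(t), where 𝔪_M(u,v) := −(1/M) e^{M v} if M < 0, 𝔪_M(u,v) := u − v if M = 0, 𝔪_M(u,v) := (1/M) e^{M u} if M > 0, and 𝔪_{H,M}(t) := 1/(M²(2H−1)) if M < 0, 𝔪_{H,M}(t) := t²/(2H(2H+1)) if M = 0, 𝔪_{H,M}(t) := e^{2Mt}/(M²(2H−1)) if M > 0. -/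
open MeasureTheory

/-- The constant `𝔪_{H,M}(t)`. -/
noncomputable def mHM (H M t : ℝ) : ℝ :=
  if M < 0 then 1 / (M ^ 2 * (2 * H - 1))
  else if M = 0 then t ^ 2 / (2 * H * (2 * H + 1))
  else Real.exp (2 * M * t) / (M ^ 2 * (2 * H - 1))

open intervalIntegral Real Set

private lemma integral_sub_rpow' (u p : ℝ) (hp : (-1:ℝ) < p) :
    ∫ v in (0:ℝ)..u, (u - v) ^ p = u ^ (p + 1) / (p + 1) := by
  have h := intervalIntegral.integral_comp_sub_left (a := 0) (b := u) (fun x : ℝ => x ^ p) u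
  simp only [sub_self, sub_zero] at h
  rw [h, integral_rpow (Or.inl hp), Real.zero_rpow (by linarith : p + 1 ≠ 0), sub_zero]

private lemma inner_exp' (M u H : ℝ) :
    ∫ v in (0:ℝ)..u, Real.exp (M*v) * (u - v) ^ (2*H-2)
      = Real.exp (M*u) * ∫ w in (0:ℝ)..u, Real.exp (-M*w) * w ^ (2*H-2) := by
  have h := intervalIntegral.integral_comp_sub_left (a := 0) (b := u)
    (fun w : ℝ => Real.exp (M*(u-w)) * w ^ (2*H-2)) u
  simp only [sub_sub_cancel, sub_self, sub_zero] at h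
  rw [h]
  have h2 : ∀ w : ℝ, Real.exp (M*(u-w)) * w ^ (2*H-2)
      = Real.exp (M*u) * (Real.exp (-M*w) * w ^ (2*H-2)) := by
    intro w
    rw [show M*(u-w) = M*u + -M*w by ring, Real.exp_add]; ring
  simp_rw [h2, intervalIntegral.integral_const_mul]

private lemma neg_case' (M t H : ℝ) (hM : M < 0) (ht : 0 < t) (hH1 : 1/2 < H) (hH2 : H < 1) :
    (∫ u in (0:ℝ)..t, Real.exp (M*u) * ∫ w in (0:ℝ)..u, Real.exp (-M*w) * w ^ (2*H-2))
      ≤ (1/(-M)) * (t ^ (2*H-1) / (2*H-1)) := by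
  have hp : (-1:ℝ) < 2*H-2 := by linarith
  have hq : (0:ℝ) < 2*H-1 := by linarith
  have hMpos : (0:ℝ) < -M := by linarith
  have hMne : M ≠ 0 := ne_of_lt hM
  set h : ℝ → ℝ := fun w => Real.exp (-M*w) * w ^ (2*H-2) with hh
  set G : ℝ → ℝ := fun u => ∫ w in (0:ℝ)..u, h w with hG
  set E : ℝ → ℝ := fun u => (Real.exp (M*u) - Real.exp (M*t))/M with hE
  set K : ℝ → ℝ := fun u => ∫ w in (0:ℝ)..u, E w * h w with hK
  have hexpc : ∀ c : ℝ, Continuous fun u : ℝ => Real.exp (c*u) :=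
    fun c => Real.continuous_exp.comp (continuous_const.mul continuous_id)
  have hint : ∀ u : ℝ, IntervalIntegrable h volume 0 u := fun u =>
    (intervalIntegrable_rpow' hp).continuousOn_mul (hexpc (-M)).continuousOn
  have hEcont : Continuous E := ((hexpc M).sub continuous_const).div_const M
  have hEh_int : ∀ u : ℝ, IntervalIntegrable (fun w => E w * h w) volume 0 u := fun u =>
    (hint u).continuousOn_mul hEcont.continuousOn
  have hrpow_cont : ∀ x : ℝ, x ≠ 0 → ContinuousAt (fun y : ℝ => y ^ (2*H-2)) x :=
    fun x hx => Real.continuousAt_rpow_const x _ (Or.inl hx)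
  have hmeasG : ∀ u ∈ Ioo (0:ℝ) t, StronglyMeasurableAtFilter h (nhds u) volume := by
    have := ContinuousOn.stronglyMeasurableAtFilter (μ := volume) (f := h)
      isOpen_Ioi (fun x hx => ((hexpc (-M)).continuousAt.mul (hrpow_cont x (ne_of_gt hx))).continuousWithinAt)
    exact fun u hu => this u hu.1
  have hGderiv : ∀ u ∈ Ioo (0:ℝ) t, HasDerivAt G (h u) u := fun u hu =>
    intervalIntegral.integral_hasDerivAt_right (hint u) (hmeasG u hu)
      ((hexpc (-M)).continuousAt.mul (hrpow_cont u (ne_of_gt hu.1)))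
  have hmeasK : ∀ u ∈ Ioo (0:ℝ) t, StronglyMeasurableAtFilter (fun w => E w * h w) (nhds u) volume := by
    have := ContinuousOn.stronglyMeasurableAtFilter (μ := volume) (f := fun w => E w * h w)
      isOpen_Ioi (fun x hx => (hEcont.continuousAt.mul
        ((hexpc (-M)).continuousAt.mul (hrpow_cont x (ne_of_gt hx)))).continuousWithinAt)
    exact fun u hu => this u hu.1
  have hKderiv : ∀ u ∈ Ioo (0:ℝ) t, HasDerivAt K (E u * h u) u := fun u hu =>
    intervalIntegral.integral_hasDerivAt_right (hEh_int u) (hmeasK u hu)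
      (hEcont.continuousAt.mul ((hexpc (-M)).continuousAt.mul (hrpow_cont u (ne_of_gt hu.1))))
  have hEderiv : ∀ u : ℝ, HasDerivAt E (Real.exp (M*u)) u := by
    intro u
    have h1 : HasDerivAt (fun u : ℝ => M * u) M u := by
      simpa using (hasDerivAt_id u).const_mul M
    have h2 := ((h1.exp.sub_const (Real.exp (M*t))).div_const M)
    exact h2.congr_deriv (mul_div_cancel_right₀ _ hMne)
  have hΦderiv : ∀ u ∈ Ioo (0:ℝ) t,
      HasDerivAt (fun u => E u * G u - K u) (Real.exp (M*u) * G u) u := by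
    intro u hu
    have := ((hEderiv u).mul (hGderiv u hu)).sub (hKderiv u hu)
    exact this.congr_deriv (by ring)
  have hGcont : ContinuousOn G (Icc 0 t) := by
    have := intervalIntegral.continuousOn_primitive_interval' (hint t) left_mem_uIcc
    rwa [uIcc_of_le ht.le] at this
  have hKcont : ContinuousOn K (Icc 0 t) := by
    have := intervalIntegral.continuousOn_primitive_interval' (hEh_int t) left_mem_uIcc
    rwa [uIcc_of_le ht.le] at this
  have hΦcont : ContinuousOn (fun u => E u * G u - K u) (Icc 0 t) :=
    (hEcont.continuousOn.mul hGcont).sub hKcont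
  have hfint : IntervalIntegrable (fun u => Real.exp (M*u) * G u) volume 0 t := by
    apply ContinuousOn.intervalIntegrable
    rw [uIcc_of_le ht.le]
    exact (hexpc M).continuousOn.mul hGcont
  have key : (∫ u in (0:ℝ)..t, Real.exp (M*u) * G u)
      = (E t * G t - K t) - (E 0 * G 0 - K 0) :=
    intervalIntegral.integral_eq_sub_of_hasDerivAt_of_le ht.le hΦcont hΦderiv hfint
  have hEt : E t = 0 := by simp [hE]
  have hG0 : G 0 = 0 := intervalIntegral.integral_same
  have hK0 : K 0 = 0 := intervalIntegral.integral_same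
  rw [key, hEt, hG0, hK0]
  simp only [zero_mul, mul_zero, sub_zero, zero_sub, sub_self]
  have hKt : -K t = ∫ w in (0:ℝ)..t, -(E w * h w) := by
    rw [hK]; simp [intervalIntegral.integral_neg]
  rw [hKt]
  have hmono : (∫ w in (0:ℝ)..t, -(E w * h w))
      ≤ ∫ w in (0:ℝ)..t, (1/(-M)) * w ^ (2*H-2) := by
    apply intervalIntegral.integral_mono_on ht.le ((hEh_int t).neg)
      ((intervalIntegrable_rpow' hp).const_mul _)
    intro w hw
    simp only [Pi.neg_apply]
    have hw0 : 0 ≤ w := hw.1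
    have hwp : (0:ℝ) ≤ w ^ (2*H-2) := Real.rpow_nonneg hw0 _
    have hac : Real.exp (M*w) * Real.exp (-M*w) = 1 := by
      rw [← Real.exp_add]; ring_nf; exact Real.exp_zero
    have hbc : (0:ℝ) ≤ Real.exp (M*t) * Real.exp (-M*w) := by positivity
    have hbound : (-(E w)) * Real.exp (-M*w) ≤ 1/(-M) := by
      rw [hE]
      apply (le_div_iff₀ hMpos).mpr
      have heq2 : -((Real.exp (M*w) - Real.exp (M*t))/M) * Real.exp (-M*w) * (-M)
          = Real.exp (M*w) * Real.exp (-M*w) - Real.exp (M*t) * Real.exp (-M*w) := by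
        field_simp
      rw [heq2, hac]
      linarith
    calc -(E w * h w) = ((-(E w)) * Real.exp (-M*w)) * w ^ (2*H-2) := by rw [hh]; ring
      _ ≤ (1/(-M)) * w ^ (2*H-2) := mul_le_mul_of_nonneg_right hbound hwp
  refine hmono.trans ?_
  rw [intervalIntegral.integral_const_mul, integral_rpow (Or.inl hp),
    Real.zero_rpow (by linarith : 2*H-2+1 ≠ 0), sub_zero, show 2*H-2+1 = 2*H-1 by ring]

/-- The double-integral bound
`α_H (1 ∨ e^{Mt}) ∫₀ᵗ ∫₀ᵘ 𝔪_M(u,v) (u-v)^{2H-2} dv du ≤ t^{2H-1} 𝔪_{H,M}(t)`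
with `α_H = H (2H - 1)`. -/
theorem double_integral_bound (H M t : ℝ) (hH : H ∈ Set.Ioo (1 / 2 : ℝ) 1) (ht : 0 < t) :
    H * (2 * H - 1) * max 1 (Real.exp (M * t)) *
        ∫ u in (0 : ℝ)..t, ∫ v in (0 : ℝ)..u, mMfun M u v * (u - v) ^ (2 * H - 2) ≤
      t ^ (2 * H - 1) * mHM H M t := by
  obtain ⟨hH1, hH2⟩ := hH
  have hq : (0:ℝ) < 2*H-1 := by linarith
  have hHq : H * (2*H-1) ≤ 1 := by nlinarith
  have hA : (0:ℝ) < t ^ (2*H-1) := Real.rpow_pos_of_pos ht _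
  rcases lt_trichotomy M 0 with hM | hM | hM
  · -- M < 0
    have hMpos : (0:ℝ) < -M := by linarith
    have hMne : M ≠ 0 := ne_of_lt hM
    simp only [mMfun, mHM, if_pos hM]
    have hmax : max 1 (Real.exp (M*t)) = 1 := by
      apply max_eq_left
      apply Real.exp_le_one_iff.mpr
      nlinarith
    rw [hmax]
    have hin : ∀ u : ℝ, (∫ v in (0:ℝ)..u, -(1/M) * Real.exp (M*v) * (u - v) ^ (2*H-2))
        = -(1/M) * (Real.exp (M*u) * ∫ w in (0:ℝ)..u, Real.exp (-M*w) * w ^ (2*H-2)) := by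
      intro u
      simp_rw [mul_assoc]
      rw [intervalIntegral.integral_const_mul, inner_exp']
    simp_rw [hin, intervalIntegral.integral_const_mul]
    have hS := neg_case' M t H hM ht hH1 hH2
    have hcoef : (0:ℝ) ≤ H * (2*H-1) := by nlinarith
    have hc1 : (0:ℝ) ≤ -(1/M) := by
      have : 1/M < 0 := div_neg_of_pos_of_neg one_pos hM
      linarith
    calc H * (2*H-1) * 1 * (-(1/M) *
          ∫ u in (0:ℝ)..t, Real.exp (M*u) * ∫ w in (0:ℝ)..u, Real.exp (-M*w) * w ^ (2*H-2))
        ≤ H * (2*H-1) * 1 * (-(1/M) * ((1/(-M)) * (t ^ (2*H-1) / (2*H-1)))) := by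
          apply mul_le_mul_of_nonneg_left (mul_le_mul_of_nonneg_left hS hc1)
          linarith [hcoef]
      _ ≤ t ^ (2*H-1) * (1 / (M^2 * (2*H-1))) := by
          have heq : H * (2*H-1) * 1 * (-(1/M) * ((1/(-M)) * (t ^ (2*H-1) / (2*H-1))))
              = (H * t ^ (2*H-1)) / M^2 := by
            field_simp [ne_of_gt hq]
            exact div_self (by linarith)
          rw [heq, show t ^ (2*H-1) * (1 / (M^2 * (2*H-1)))
            = (t ^ (2*H-1) / (2*H-1)) / M^2 by
              rw [mul_one_div, mul_comm (M^2) (2*H-1), ← div_div]]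
          apply (div_le_div_iff_of_pos_right (by positivity : (0:ℝ) < M^2)).mpr
          apply (le_div_iff₀ hq).mpr
          nlinarith [hA]
  · -- M = 0
    subst hM
    simp only [mMfun, mHM, lt_self_iff_false, if_false, eq_self_iff_true, if_true]
    have hEq : Set.EqOn (fun u => ∫ v in (0:ℝ)..u, (u - v) * (u - v) ^ (2*H-2))
        (fun u => u ^ (2*H) / (2*H)) (Set.uIcc 0 t) := by
      intro u hu
      rw [Set.uIcc_of_le ht.le] at hu
      have hu0 : 0 ≤ u := hu.1
      have h1 : (∫ v in (0:ℝ)..u, (u - v) * (u - v) ^ (2*H-2))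
          = ∫ v in (0:ℝ)..u, (u - v) ^ (2*H-1) := by
        apply intervalIntegral.integral_congr
        intro v hv
        rw [Set.uIcc_of_le hu0] at hv
        show (u - v) * (u - v) ^ (2*H-2) = (u - v) ^ (2*H-1)
        rcases eq_or_lt_of_le (by linarith [hv.2] : (0:ℝ) ≤ u - v) with h | h
        · rw [← h, zero_mul, Real.zero_rpow (by linarith : 2*H-1 ≠ 0)]
        · rw [show 2*H-1 = (2*H-2)+1 by ring, Real.rpow_add h, Real.rpow_one]; ring
      simp only
      rw [h1, integral_sub_rpow' u _ (by linarith), show 2*H-1+1 = 2*H by ring]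
    rw [intervalIntegral.integral_congr hEq]
    simp only [zero_mul, Real.exp_zero, max_self]
    rw [intervalIntegral.integral_div,
      integral_rpow (Or.inl (by linarith : (-1:ℝ) < 2*H)),
      Real.zero_rpow (by linarith : 2*H+1 ≠ 0), sub_zero]
    have ht2 : t ^ (2*H+1) = t ^ (2*H-1) * t^2 := by
      rw [show 2*H+1 = (2*H-1) + 2 by ring, Real.rpow_add ht]
      norm_num [Real.rpow_natCast]
    rw [ht2]
    have hpos : (0:ℝ) ≤ t ^ (2*H-1) * (t^2/(2*H*(2*H+1))) := by
      apply mul_nonneg hA.le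
      apply div_nonneg (sq_nonneg t); nlinarith
    calc H * (2*H-1) * 1 * (t ^ (2*H-1) * t^2 / (2*H+1) / (2*H))
        = (H * (2*H-1)) * (t ^ (2*H-1) * (t^2/(2*H*(2*H+1)))) := by
          have h1 : (2*H) ≠ 0 := by linarith
          have h2 : (2*H+1) ≠ 0 := by linarith
          field_simp
      _ ≤ 1 * (t ^ (2*H-1) * (t^2/(2*H*(2*H+1)))) := mul_le_mul_of_nonneg_right hHq hpos
      _ = t ^ (2*H-1) * (t^2/(2*H*(2*H+1))) := one_mul _
  · -- M > 0
    have hM' : M ≠ 0 := ne_of_gt hM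
    simp only [mMfun, mHM, if_neg (by linarith : ¬ M < 0), if_neg hM']
    have hinner : ∀ u : ℝ, (∫ v in (0:ℝ)..u, 1/M * Real.exp (M*u) * (u - v) ^ (2*H-2))
        = 1/M * Real.exp (M*u) * (u ^ (2*H-1)/(2*H-1)) := by
      intro u
      rw [intervalIntegral.integral_const_mul, integral_sub_rpow' u _ (by linarith),
        show 2*H-2+1 = 2*H-1 by ring]
    simp_rw [hinner]
    have hrc : Continuous fun x : ℝ => x ^ (2*H-1) :=
      continuous_iff_continuousAt.2 fun x => Real.continuousAt_rpow_const x _ (Or.inr (by linarith))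
    have hce : Continuous fun u : ℝ => Real.exp (M*u) :=
      Real.continuous_exp.comp (continuous_const.mul continuous_id)
    have hmono : (∫ u in (0:ℝ)..t, 1/M * Real.exp (M*u) * (u ^ (2*H-1)/(2*H-1)))
        ≤ ∫ u in (0:ℝ)..t, 1/M * Real.exp (M*u) * (t ^ (2*H-1)/(2*H-1)) := by
      apply intervalIntegral.integral_mono_on ht.le
      · exact ((continuous_const.mul hce).mul (hrc.div_const _)).intervalIntegrable 0 t
      · exact ((continuous_const.mul hce).mul continuous_const).intervalIntegrable 0 t
      · intro u hu
        have h1 : u ^ (2*H-1) ≤ t ^ (2*H-1) := Real.rpow_le_rpow hu.1 hu.2 (by linarith)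
        have h2 : (0:ℝ) ≤ 1/M * Real.exp (M*u) :=
          le_of_lt (mul_pos (one_div_pos.mpr hM) (Real.exp_pos _))
        exact mul_le_mul_of_nonneg_left ((div_le_div_iff_of_pos_right hq).mpr h1) h2
    have hexp : (∫ u in (0:ℝ)..t, Real.exp (M*u)) = (Real.exp (M*t) - 1)/M := by
      rw [intervalIntegral.integral_comp_mul_left (fun x => Real.exp x) hM']
      simp [integral_exp, smul_eq_mul]
      ring
    have hI2 : (∫ u in (0:ℝ)..t, 1/M * Real.exp (M*u) * (t ^ (2*H-1)/(2*H-1)))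
        = (1/M * (t ^ (2*H-1)/(2*H-1))) * ((Real.exp (M*t) - 1)/M) := by
      simp_rw [show ∀ u:ℝ, 1/M * Real.exp (M*u) * (t ^ (2*H-1)/(2*H-1))
        = (1/M * (t ^ (2*H-1)/(2*H-1))) * Real.exp (M*u) from fun u => by ring,
        intervalIntegral.integral_const_mul, hexp]
    rw [hI2] at hmono
    have hmax : max 1 (Real.exp (M*t)) = Real.exp (M*t) := by
      apply max_eq_right
      have := Real.exp_le_exp.mpr (le_of_lt (mul_pos hM ht))
      rwa [Real.exp_zero] at this
    rw [hmax]
    have hcoef : (0:ℝ) ≤ H * (2*H-1) * Real.exp (M*t) :=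
      le_of_lt (mul_pos (mul_pos (by linarith) hq) (Real.exp_pos _))
    calc H * (2*H-1) * Real.exp (M*t) *
          ∫ u in (0:ℝ)..t, 1/M * Real.exp (M*u) * (u ^ (2*H-1)/(2*H-1))
        ≤ H * (2*H-1) * Real.exp (M*t) *
            ((1/M * (t ^ (2*H-1)/(2*H-1))) * ((Real.exp (M*t) - 1)/M)) :=
          mul_le_mul_of_nonneg_left hmono hcoef
      _ ≤ t ^ (2*H-1) * (Real.exp (2*M*t) / (M^2 * (2*H-1))) := by
          rw [show 2*M*t = M*t + M*t by ring, Real.exp_add]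
          have hE : (1:ℝ) ≤ Real.exp (M*t) := by
            have := Real.exp_le_exp.mpr (le_of_lt (mul_pos hM ht))
            rwa [Real.exp_zero] at this
          have hE0 : (0:ℝ) < Real.exp (M*t) := Real.exp_pos _
          have hq' : (2*H-1) ≠ 0 := ne_of_gt hq
          set E := Real.exp (M*t) with hEdef
          set A := t ^ (2*H-1) with hAdef
          have key : H * (2*H-1) * (E-1) ≤ E := by nlinarith
          have hden : (0:ℝ) < M^2 * (2*H-1) := mul_pos (by positivity) hq
          calc H * (2*H-1) * E * (1/M * (A/(2*H-1)) * ((E-1)/M))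
              = (H * (2*H-1) * (E-1) * (E * A)) / (M^2 * (2*H-1)) := by
                field_simp
            _ ≤ (E * (E * A)) / (M^2 * (2*H-1)) := by
                apply (div_le_div_iff_of_pos_right hden).mpr
                nlinarith [mul_le_mul_of_nonneg_right key (le_of_lt (mul_pos hE0 hA))]
            _ = A * (E * E / (M^2 * (2*H-1))) := by field_simp
end

section
/- Let T > 0, σ ∈ ℝ, α ∈ (0,1], let w : [0,T] → ℝ be α-Hölder continuous, let b : ℝ → ℝ be Lipschitz continuous, and let X be the unique continuous solution on [0,T] of the equation with initial condition x₀. Then X is α-Hölder continuous on [0,T]: there exists C ≥ 0 such that |X(t) − X(s)| ≤ C |t − s|^α for all s, t ∈ [0,T]. -/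
open MeasureTheory

/-- If `w` is `α`-Hölder continuous on `[0, T]` and `b` is Lipschitz, then the solution `X` of
the equation is `α`-Hölder continuous on `[0, T]`. -/
theorem solution_is_holder (T σ x₀ α : ℝ) (hT : 0 < T) (hα : α ∈ Set.Ioc (0 : ℝ) 1)
    (w b : ℝ → ℝ) (Cw : ℝ) (hCw : 0 ≤ Cw)
    (hw : ∀ s ∈ Set.Icc (0 : ℝ) T, ∀ t ∈ Set.Icc (0 : ℝ) T, |w t - w s| ≤ Cw * |t - s| ^ α)
    (Lb : ℝ) (hLb : 0 ≤ Lb) (hb : ∀ y z : ℝ, |b y - b z| ≤ Lb * |y - z|)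
    (X : ℝ → ℝ) (hX : IsSolution T σ x₀ b w X) :
    ∃ C : ℝ, 0 ≤ C ∧ ∀ s ∈ Set.Icc (0 : ℝ) T, ∀ t ∈ Set.Icc (0 : ℝ) T,
      |X t - X s| ≤ C * |t - s| ^ α := by
  obtain ⟨hXc, hXeq⟩ := hX
  obtain ⟨hα0, hα1⟩ := hα
  -- b is continuous
  have hbcont : Continuous b := by
    have : LipschitzWith ⟨Lb, hLb⟩ b := by
      apply LipschitzWith.of_dist_le_mul
      intro y z
      show dist (b y) (b z) ≤ Lb * dist y z
      simpa [Real.dist_eq] using hb y z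
    exact this.continuous
  have hbX : ContinuousOn (fun u => b (X u)) (Set.Icc 0 T) :=
    hbcont.comp_continuousOn hXc
  obtain ⟨M, hM⟩ := (isCompact_Icc : IsCompact (Set.Icc (0:ℝ) T)).exists_bound_of_continuousOn hbX
  set M' : ℝ := max M 0 with hM'def
  have hM'0 : 0 ≤ M' := le_max_right _ _
  have hM' : ∀ u ∈ Set.Icc (0:ℝ) T, |b (X u)| ≤ M' := fun u hu =>
    le_trans (by simpa using hM u hu) (le_max_left _ _)
  have hTα : (0:ℝ) ≤ T ^ (1 - α) := Real.rpow_nonneg hT.le _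
  refine ⟨M' * T ^ (1 - α) + |σ| * Cw, by positivity, ?_⟩
  intro s hs t ht
  -- |t - s| ≤ T
  have habsT : |t - s| ≤ T := by
    rw [abs_sub_le_iff]
    constructor <;> linarith [hs.1, hs.2, ht.1, ht.2]
  -- key: |t-s| ≤ T^(1-α) * |t-s|^α
  have hkey : |t - s| ≤ T ^ (1 - α) * |t - s| ^ α := by
    rcases eq_or_ne t s with h | h
    · simp [h, Real.zero_rpow (ne_of_gt hα0)]
    · have hpos : 0 < |t - s| := abs_pos.mpr (sub_ne_zero.mpr h)
      have h1 : |t - s| = |t - s| ^ (1 - α) * |t - s| ^ α := by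
        rw [← Real.rpow_add hpos]
        simp
      calc |t - s| = |t - s| ^ (1 - α) * |t - s| ^ α := h1
        _ ≤ T ^ (1 - α) * |t - s| ^ α := mul_le_mul_of_nonneg_right
            (Real.rpow_le_rpow hpos.le habsT (by linarith)) (Real.rpow_nonneg hpos.le _)
  -- the integral equation difference
  have hsub : Set.uIcc s t ⊆ Set.Icc 0 T := Set.uIcc_subset_Icc hs ht
  have hint : ∀ a' b', a' ∈ Set.Icc (0:ℝ) T → b' ∈ Set.Icc (0:ℝ) T →
      IntervalIntegrable (fun u => b (X u)) volume a' b' := fun a' b' ha' hb' =>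
    (hbX.mono (Set.uIcc_subset_Icc ha' hb')).intervalIntegrable
  have h0 : (0:ℝ) ∈ Set.Icc (0:ℝ) T := ⟨le_refl _, hT.le⟩
  have hdiff : X t - X s = (∫ u in s..t, b (X u)) + σ * (w t - w s) := by
    rw [hXeq t ht, hXeq s hs,
      ← intervalIntegral.integral_interval_sub_left (hint 0 t h0 ht) (hint 0 s h0 hs)]
    ring
  have hIbound : |∫ u in s..t, b (X u)| ≤ M' * |t - s| := by
    have := intervalIntegral.norm_integral_le_of_norm_le_const
      (C := M') (f := fun u => b (X u)) (a := s) (b := t) ?_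
    · simpa [Real.norm_eq_abs] using this
    · intro u hu
      exact hM' u (hsub (Set.uIoc_subset_uIcc hu))
  calc |X t - X s| ≤ |∫ u in s..t, b (X u)| + |σ * (w t - w s)| := by
        rw [hdiff]; exact abs_add_le _ _
    _ ≤ M' * |t - s| + |σ| * (Cw * |t - s| ^ α) := by
        rw [abs_mul]
        gcongr
        exact hw s hs t ht
    _ ≤ M' * (T ^ (1 - α) * |t - s| ^ α) + |σ| * (Cw * |t - s| ^ α) := by
        gcongr
    _ = (M' * T ^ (1 - α) + |σ| * Cw) * |t - s| ^ α := by ring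
end

section
/- Let a₁ < a₂ be real numbers, let f : [a₁, a₂] → ℝ be measurable with f(x) ≥ f₀ > 0 for all x ∈ [a₁, a₂] and ∫_{a₁}^{a₂} f(x) dx ≤ 1, let h : [a₁, a₂] → ℝ be continuous and c ∈ ℝ. Then ∫_{a₁}^{a₂} ( c + ∫_{a₁}^x h(y) dy )² f(x) dx ≤ 2 c² + (2 (a₂ − a₁) / f₀) ∫_{a₁}^{a₂} h(y)² f(y) dy. -/
open MeasureTheory

theorem cs_interval (a x : ℝ) (hax : a ≤ x) (g : ℝ → ℝ)
    (hg1 : IntegrableOn g (Set.Ioc a x))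
    (hg2 : IntegrableOn (fun y => g y ^ 2) (Set.Ioc a x)) :
    (∫ y in a..x, g y) ^ 2 ≤ (x - a) * ∫ y in a..x, g y ^ 2 := by
  rcases eq_or_lt_of_le hax with rfl | hlt
  · simp
  set μ := volume.restrict (Set.Ioc a x) with hμdef
  set A := ∫ y, g y ∂μ with hA
  set I := ∫ y, g y ^ 2 ∂μ with hI
  have hμuniv : (μ Set.univ).toReal = x - a := by
    simp [hμdef, Real.volume_Ioc, ENNReal.toReal_ofReal (by linarith : (0:ℝ) ≤ x - a)]
  have key : 0 ≤ ∫ y, ((x - a) * g y - A) ^ 2 ∂μ :=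
    integral_nonneg fun y => sq_nonneg _
  have expand : ∫ y, ((x - a) * g y - A) ^ 2 ∂μ
      = (x - a) ^ 2 * I - 2 * (x - a) * A * A + A ^ 2 * (x - a) := by
    have h1 : Integrable (fun y => (x - a) ^ 2 * g y ^ 2 - 2 * (x - a) * A * g y) μ :=
      (hg2.const_mul _).sub (hg1.const_mul _)
    have : (fun y => ((x - a) * g y - A) ^ 2)
        = fun y => ((x - a) ^ 2 * g y ^ 2 - 2 * (x - a) * A * g y) + A ^ 2 := by
      funext y; ring
    rw [this, integral_add h1 (integrable_const _), integral_sub (hg2.const_mul _)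
      (hg1.const_mul _), integral_const_mul, integral_const_mul, integral_const, measureReal_def, hμuniv]
    simp [hA, hI]; ring
  rw [expand] at key
  rw [intervalIntegral.integral_of_le hax, intervalIntegral.integral_of_le hax]
  nlinarith [hlt]

/-- If `f ≥ f₀ > 0` on `[a₁, a₂]` with `∫ f ≤ 1` and `g` is continuous on `[a₁, a₂]`, then
`∫ (c + ∫_{a₁}^x g)² f ≤ 2 c² + (2 (a₂ - a₁) / f₀) ∫ g² f`. -/
theorem primitive_weighted_bound (a₁ a₂ : ℝ) (ha : a₁ < a₂) (f g : ℝ → ℝ) (f₀ c : ℝ)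
    (hf₀ : 0 < f₀) (hfmeas : Measurable f)
    (hflb : ∀ x ∈ Set.Icc a₁ a₂, f₀ ≤ f x)
    (hfint : IntegrableOn f (Set.Icc a₁ a₂))
    (hf1 : (∫ x in a₁..a₂, f x) ≤ 1)
    (hg : ContinuousOn g (Set.Icc a₁ a₂)) :
    (∫ x in a₁..a₂, (c + ∫ y in a₁..x, g y) ^ 2 * f x) ≤
      2 * c ^ 2 + 2 * (a₂ - a₁) / f₀ * ∫ y in a₁..a₂, (g y) ^ 2 * f y := by
  set s := Set.Icc a₁ a₂ with hs
  have hg2 : ContinuousOn (fun y => g y ^ 2) s := hg.pow 2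
  have hgint : IntegrableOn g s := hg.integrableOn_Icc
  have hg2int : IntegrableOn (fun y => g y ^ 2) s := hg2.integrableOn_Icc
  set J := ∫ y in a₁..a₂, (g y) ^ 2 * f y with hJdef
  have hJ : 0 ≤ J :=
    intervalIntegral.integral_nonneg ha.le fun u hu =>
      mul_nonneg (sq_nonneg _) (le_trans hf₀.le (hflb u hu))
  -- integrability of g² f on s
  have hg2f : IntegrableOn (fun y => g y ^ 2 * f y) s := by
    obtain ⟨C, hC⟩ := isCompact_Icc.exists_bound_of_continuousOn hg2
    apply Integrable.mono' (hfint.norm.const_mul C)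
      ((hg2.aestronglyMeasurable measurableSet_Icc).mul hfmeas.aestronglyMeasurable.restrict)
    refine (ae_restrict_iff' measurableSet_Icc).2 (Filter.Eventually.of_forall fun y hy => ?_)
    simp only [Pi.mul_apply, norm_mul]
    exact mul_le_mul (hC y hy) le_rfl (norm_nonneg _)
      (le_trans (norm_nonneg _) (hC y hy))
  have toII : ∀ {h : ℝ → ℝ}, IntegrableOn h s → IntervalIntegrable h volume a₁ a₂ := by
    intro h hh
    rw [hs, ← Set.uIcc_of_le ha.le] at hh
    exact hh.intervalIntegrable
  -- ∫ g² ≤ J / f₀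
  have hg2bound : ∫ y in a₁..a₂, g y ^ 2 ≤ J / f₀ := by
    have h1 : ∫ y in a₁..a₂, f₀ * g y ^ 2 ≤ J := by
      apply intervalIntegral.integral_mono_on ha.le
        (toII (hg2int.const_mul f₀))
        (toII hg2f)
      intro y hy
      nlinarith [sq_nonneg (g y), hflb y hy]
    rw [intervalIntegral.integral_const_mul] at h1
    rw [le_div_iff₀ hf₀]
    linarith
  set K := 2 * c ^ 2 + 2 * (a₂ - a₁) / f₀ * J with hK
  have hKnn : 0 ≤ K := by
    have : 0 ≤ 2 * (a₂ - a₁) / f₀ * J :=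
      mul_nonneg (div_nonneg (by linarith) hf₀.le) hJ
    positivity
  -- pointwise bound
  have hpt : ∀ x ∈ s, (c + ∫ y in a₁..x, g y) ^ 2 * f x ≤ K * f x := by
    intro x hx
    have hfx : 0 ≤ f x := le_trans hf₀.le (hflb x hx)
    apply mul_le_mul_of_nonneg_right _ hfx
    set G := ∫ y in a₁..x, g y with hG
    have hcs : G ^ 2 ≤ (x - a₁) * ∫ y in a₁..x, g y ^ 2 :=
      cs_interval a₁ x hx.1 g
        (hgint.mono_set ((Set.Ioc_subset_Icc_self).trans (Set.Icc_subset_Icc_right hx.2)))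
        (hg2int.mono_set ((Set.Ioc_subset_Icc_self).trans (Set.Icc_subset_Icc_right hx.2)))
    have hi1 : IntervalIntegrable (fun y => g y ^ 2) volume a₁ x := by
      have := hg2int.mono_set (Set.Icc_subset_Icc_right hx.2)
      rw [← Set.uIcc_of_le hx.1] at this
      exact this.intervalIntegrable
    have hi2 : IntervalIntegrable (fun y => g y ^ 2) volume x a₂ := by
      have := hg2int.mono_set (Set.Icc_subset_Icc_left hx.1)
      rw [← Set.uIcc_of_le hx.2] at this
      exact this.intervalIntegrable
    have hmono : ∫ y in a₁..x, g y ^ 2 ≤ ∫ y in a₁..a₂, g y ^ 2 := by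
      rw [← intervalIntegral.integral_add_adjacent_intervals hi1 hi2]
      have : 0 ≤ ∫ y in x..a₂, g y ^ 2 :=
        intervalIntegral.integral_nonneg hx.2 fun u _ => sq_nonneg _
      linarith
    have hq : 0 ≤ ∫ y in a₁..x, g y ^ 2 :=
      intervalIntegral.integral_nonneg hx.1 fun u _ => sq_nonneg _
    have hG2 : G ^ 2 ≤ (a₂ - a₁) * (J / f₀) := by
      calc G ^ 2 ≤ (x - a₁) * ∫ y in a₁..x, g y ^ 2 := hcs
        _ ≤ (a₂ - a₁) * ∫ y in a₁..x, g y ^ 2 := by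
            apply mul_le_mul_of_nonneg_right (by linarith [hx.2]) hq
        _ ≤ (a₂ - a₁) * ∫ y in a₁..a₂, g y ^ 2 := by
            apply mul_le_mul_of_nonneg_left hmono (by linarith)
        _ ≤ (a₂ - a₁) * (J / f₀) := by
            apply mul_le_mul_of_nonneg_left hg2bound (by linarith)
    have h2 : (c + G) ^ 2 ≤ 2 * c ^ 2 + 2 * G ^ 2 := by nlinarith [sq_nonneg (c - G)]
    have : 2 * G ^ 2 ≤ 2 * (a₂ - a₁) / f₀ * J := by
      rw [hK] at *
      have := mul_le_mul_of_nonneg_left hG2 (by norm_num : (0:ℝ) ≤ 2)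
      calc 2 * G ^ 2 ≤ 2 * ((a₂ - a₁) * (J / f₀)) := this
        _ = 2 * (a₂ - a₁) / f₀ * J := by field_simp
    rw [hK]; linarith
  -- integrability of the LHS integrand
  have hGcont : ContinuousOn (fun x => (c + ∫ y in a₁..x, g y) ^ 2) s := by
    have : ContinuousOn (fun x => ∫ y in a₁..x, g y) s := by
      have := intervalIntegral.continuousOn_primitive_interval
        (a := a₁) (b := a₂) (f := g) (μ := volume) ?_
      · rwa [Set.uIcc_of_le ha.le] at this
      · rwa [Set.uIcc_of_le ha.le]
    exact ((continuousOn_const.add this).pow 2)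
  have hLHSint : IntegrableOn (fun x => (c + ∫ y in a₁..x, g y) ^ 2 * f x) s := by
    obtain ⟨C, hC⟩ := isCompact_Icc.exists_bound_of_continuousOn hGcont
    apply Integrable.mono' (hfint.norm.const_mul C)
      ((hGcont.aestronglyMeasurable measurableSet_Icc).mul hfmeas.aestronglyMeasurable.restrict)
    refine (ae_restrict_iff' measurableSet_Icc).2 (Filter.Eventually.of_forall fun y hy => ?_)
    simp only [Pi.mul_apply, norm_mul]
    exact mul_le_mul (hC y hy) le_rfl (norm_nonneg _)
      (le_trans (norm_nonneg _) (hC y hy))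
  have hmain : (∫ x in a₁..a₂, (c + ∫ y in a₁..x, g y) ^ 2 * f x) ≤
      ∫ x in a₁..a₂, K * f x := by
    exact intervalIntegral.integral_mono_on ha.le
      (toII hLHSint)
      (toII (hfint.const_mul K)) hpt
  have hfinal : ∫ x in a₁..a₂, K * f x ≤ K := by
    rw [intervalIntegral.integral_const_mul]
    calc K * ∫ x in a₁..a₂, f x ≤ K * 1 := mul_le_mul_of_nonneg_left hf1 hKnn
      _ = K := mul_one K
  calc (∫ x in a₁..a₂, (c + ∫ y in a₁..x, g y) ^ 2 * f x) ≤ K := hmain.trans hfinal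
    _ = 2 * c ^ 2 + 2 * (a₂ - a₁) / f₀ * J := hK
end
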